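/- arXiv:0811.2312 — 5 statements merged into one kernel-verified Lean document; each statement's English description precedes it below -/
import Mathlib

section
/- Suppose Alice prepares a qudit in a basis state of one of two mutually unbiased bases of ℂ^d, choosing each of the d basis states of either basis with equal prior probability 1/d, and Bob measures with an arbitrary POVM, without knowing which basis was used. Then the sum of the mutual information about the messages sent via the two bases satisfies I_1 + I_2 ≤ log₂ d. -/
open scoped BigOperators ComplexOrder
open Matrix

noncomputable section

/-- Shannon entropy (in bits) of a finitely-indexed probability vector. -/
def shannonEntropy {ι : Type*} [Fintype ι] (q : ι → ℝ) : ℝ :=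
  -∑ i, q i * Real.logb 2 (q i)

/-- Born probability ⟨v|M|v⟩ of POVM element `M` on the (unit vector) state `v`. -/
def outProb {d : ℕ} (M : Matrix (Fin d) (Fin d) ℂ) (v : Fin d → ℂ) : ℝ :=
  (star v ⬝ᵥ M.mulVec v).re

/-- A finite family of matrices is a POVM if each member is positive semidefinite
and they sum to the identity. -/
def IsPOVM {d : ℕ} {S : Type*} [Fintype S] (E : S → Matrix (Fin d) (Fin d) ℂ) : Prop :=
  (∀ s, (E s).PosSemidef) ∧ ∑ s, E s = 1

/-- `B` lists the vectors of an orthonormal basis of ℂ^d. -/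
def IsONB {d : ℕ} (B : Fin d → Fin d → ℂ) : Prop :=
  ∀ i j, star (B i) ⬝ᵥ B j = if i = j then 1 else 0

/-- Two bases of ℂ^d are mutually unbiased: all squared overlaps equal 1/d. -/
def AreMUB {d : ℕ} (B C : Fin d → Fin d → ℂ) : Prop :=
  ∀ i j, ‖star (B i) ⬝ᵥ C j‖ ^ 2 = 1 / d

/-- Mutual information (in bits) between Alice's input `i` (prior `p i`, state `B i`)
and Bob's POVM outcome `s`:  `I = H({p i}) - ∑ s p(s) H({p_{i|s}})`. -/
def mutInfo {d : ℕ} {S : Type*} [Fintype S] (B : Fin d → Fin d → ℂ) (p : Fin d → ℝ)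
    (E : S → Matrix (Fin d) (Fin d) ℂ) : ℝ :=
  shannonEntropy p -
    ∑ s, (∑ i, p i * outProb (E s) (B i)) *
      shannonEntropy (fun i =>
        p i * outProb (E s) (B i) / ∑ j, p j * outProb (E s) (B j))


namespace MUBAux

open Complex Filter
open scoped Topology


variable {d : ℕ}

lemma dot_conj (v w : Fin d → ℂ) : star v ⬝ᵥ w = (starRingEnd ℂ) (star w ⬝ᵥ v) := by
  simp [dotProduct, map_sum, mul_comm]

lemma norm_dot_conj (v w : Fin d → ℂ) : ‖star v ⬝ᵥ w‖ = ‖star w ⬝ᵥ v‖ := by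
  rw [dot_conj]; exact RCLike.norm_conj _

lemma onb_complete {B : Fin d → Fin d → ℂ} (hB : IsONB B) (k l : Fin d) :
    ∑ i, (starRingEnd ℂ) (B i k) * B i l = if k = l then 1 else 0 := by
  classical
  set M : Matrix (Fin d) (Fin d) ℂ := Matrix.of (fun i k => B i k) with hM
  have h1 : M * Mᴴ = 1 := by
    ext i j
    have := hB j i
    simp only [dotProduct, Pi.star_apply, RCLike.star_def] at this
    simp only [Matrix.mul_apply, Matrix.conjTranspose_apply, Matrix.one_apply, hM,
      Matrix.of_apply, RCLike.star_def]
    rw [show ∑ k, B i k * (starRingEnd ℂ) (B j k) = ∑ k, (starRingEnd ℂ) (B j k) * B i k by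
      simp [mul_comm], this]
    simp [eq_comm]
  have h2 : Mᴴ * M = 1 := mul_eq_one_comm.mp h1
  have := congrArg (fun N => N k l) h2
  simp only [Matrix.mul_apply, Matrix.conjTranspose_apply, Matrix.one_apply, hM,
    Matrix.of_apply] at this
  simpa using this

lemma dot_expand {B : Fin d → Fin d → ℂ} (hB : IsONB B) (v w : Fin d → ℂ) :
    star v ⬝ᵥ w = ∑ i, (star v ⬝ᵥ B i) * (star (B i) ⬝ᵥ w) := by
  classical
  have : ∀ i, (star v ⬝ᵥ B i) * (star (B i) ⬝ᵥ w)
      = ∑ k, ∑ l, ((starRingEnd ℂ) (v k) * w l) * (B i k * (starRingEnd ℂ) (B i l)) := by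
    intro i
    rw [dotProduct, dotProduct, Finset.sum_mul_sum]
    refine Finset.sum_congr rfl fun k _ => Finset.sum_congr rfl fun l _ => by
      simp only [Pi.star_apply, RCLike.star_def]; ring
  rw [Finset.sum_congr rfl fun i _ => this i]
  rw [Finset.sum_comm]
  have : ∀ k, ∑ i, ∑ l, ((starRingEnd ℂ) (v k) * w l) * (B i k * (starRingEnd ℂ) (B i l))
      = (starRingEnd ℂ) (v k) * w k := by
    intro k
    rw [Finset.sum_comm]
    have : ∀ l, ∑ i, ((starRingEnd ℂ) (v k) * w l) * (B i k * (starRingEnd ℂ) (B i l))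
        = ((starRingEnd ℂ) (v k) * w l) * (if l = k then 1 else 0) := by
      intro l
      rw [← Finset.mul_sum]
      congr 1
      rw [show ∑ i, B i k * (starRingEnd ℂ) (B i l) = ∑ i, (starRingEnd ℂ) (B i l) * B i k by
        simp [mul_comm]]
      exact onb_complete hB l k
    rw [Finset.sum_congr rfl fun l _ => this l]
    simp
  rw [Finset.sum_congr rfl fun k _ => this k]
  rfl

lemma re_dot_self (y : Fin d → ℂ) : (star y ⬝ᵥ y).re = ∑ i, ‖y i‖ ^ 2 := by
  rw [dotProduct, Complex.re_sum]
  refine Finset.sum_congr rfl fun i _ => ?_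
  simp [Pi.star_apply, RCLike.star_def, mul_comm, Complex.mul_conj,
    Complex.normSq_eq_norm_sq, ← Complex.ofReal_pow]

lemma parseval {B : Fin d → Fin d → ℂ} (hB : IsONB B) (w : Fin d → ℂ) :
    ∑ i, ‖star w ⬝ᵥ B i‖ ^ 2 = (star w ⬝ᵥ w).re := by
  have h := dot_expand hB w w
  have h2 : ∀ i, (star w ⬝ᵥ B i) * (star (B i) ⬝ᵥ w) = (‖star w ⬝ᵥ B i‖ ^ 2 : ℝ) := by
    intro i
    rw [show star (B i) ⬝ᵥ w = (starRingEnd ℂ) (star w ⬝ᵥ B i) from dot_conj _ _]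
    rw [Complex.mul_conj]
    simp [Complex.normSq_eq_norm_sq]
  rw [Finset.sum_congr rfl fun i _ => h2 i] at h
  have := congrArg Complex.re h
  rw [Complex.re_sum] at this
  simpa [← Complex.ofReal_pow] using this.symm

lemma sum_dot_mulVec {B : Fin d → Fin d → ℂ} (hB : IsONB B) (M : Matrix (Fin d) (Fin d) ℂ) :
    ∑ i, star (B i) ⬝ᵥ M.mulVec (B i) = Matrix.trace M := by
  classical
  have : ∀ i, star (B i) ⬝ᵥ M.mulVec (B i)
      = ∑ k, ∑ l, M k l * ((starRingEnd ℂ) (B i k) * B i l) := by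
    intro i
    simp only [dotProduct, Matrix.mulVec, dotProduct, Finset.mul_sum, Pi.star_apply,
      RCLike.star_def]
    refine Finset.sum_congr rfl fun k _ => Finset.sum_congr rfl fun l _ => by ring
  rw [Finset.sum_congr rfl fun i _ => this i, Finset.sum_comm]
  have : ∀ k, ∑ i, ∑ l, M k l * ((starRingEnd ℂ) (B i k) * B i l) = M k k := by
    intro k
    rw [Finset.sum_comm]
    have : ∀ l, ∑ i, M k l * ((starRingEnd ℂ) (B i k) * B i l)
        = M k l * (if k = l then 1 else 0) := by
      intro l
      rw [← Finset.mul_sum, onb_complete hB k l]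
    rw [Finset.sum_congr rfl fun l _ => this l]
    simp
  rw [Finset.sum_congr rfl fun k _ => this k]
  rfl



lemma rpow_sq_eq {x : ℝ} (hx : 0 ≤ x) (e : ℝ) : (x ^ e) ^ 2 = x ^ (e * 2) := by
  rw [← Real.rpow_natCast (x ^ e) 2, ← Real.rpow_mul hx]
  norm_num

set_option maxHeartbeats 2000000 in
/-- The three-lines bilinear estimate for a flat isometry. -/
lemma bilinear {n : ℕ} (V : Matrix (Fin n) (Fin n) ℂ)
    (hiso : ∀ x : Fin n → ℂ, ∑ j, ‖V.mulVec x j‖ ^ 2 = ∑ i, ‖x i‖ ^ 2)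
    (hflat : ∀ j i, ‖V j i‖ ≤ (n : ℝ) ^ (-(1/2) : ℝ))
    {θ : ℝ} (hθ0 : 0 < θ) (hθ1 : θ < 1) (c w : Fin n → ℂ) :
    ‖∑ j, w j * V.mulVec c j‖ ≤
      Real.sqrt ((∑ j, ‖w j‖ ^ (2/(1+θ))) * (∑ i, ‖c i‖ ^ (2/(1+θ)))) ^ ((1:ℝ) - θ) *
        ((n : ℝ) ^ (-(1/2) : ℝ) * (∑ i, ‖c i‖ ^ (2/(1+θ)))
          * (∑ j, ‖w j‖ ^ (2/(1+θ)))) ^ θ := by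
  classical
  set p : ℝ := 2/(1+θ) with hp
  have h1θ : (0:ℝ) < 1 + θ := by linarith
  have hp0 : 0 < p := by positivity
  have hp2 : p < 2 := by
    rw [hp, div_lt_iff₀ h1θ]; nlinarith
  have hp1 : 1 < p := by
    rw [hp, lt_div_iff₀ h1θ]; nlinarith
  set A : ℝ := ∑ i, ‖c i‖ ^ p with hA
  set W : ℝ := ∑ j, ‖w j‖ ^ p with hW
  have hA0 : 0 ≤ A := Finset.sum_nonneg fun i _ => Real.rpow_nonneg (norm_nonneg _) _
  have hW0 : 0 ≤ W := Finset.sum_nonneg fun j _ => Real.rpow_nonneg (norm_nonneg _) _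
  -- degenerate cases
  by_cases hAz : A = 0
  · have hc0 : ∀ i, c i = 0 := by
      intro i
      have h1 : ‖c i‖ ^ p = 0 := by
        have := Finset.single_le_sum
          (f := fun i => ‖c i‖ ^ p)
          (fun i _ => Real.rpow_nonneg (norm_nonneg _) _) (Finset.mem_univ i)
        have h2 : (0:ℝ) ≤ ‖c i‖ ^ p := Real.rpow_nonneg (norm_nonneg _) _
        rw [← hA] at this
        linarith [hAz ▸ this]
      have := (Real.rpow_eq_zero (norm_nonneg _) (ne_of_gt hp0)).mp h1
      simpa using this
    have hcf : c = 0 := funext hc0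
    rw [hcf]
    simp only [Matrix.mulVec_zero, Pi.zero_apply, mul_zero, Finset.sum_const_zero, norm_zero]
    positivity
  by_cases hWz : W = 0
  · have hw0 : ∀ j, w j = 0 := by
      intro j
      have h1 : ‖w j‖ ^ p = 0 := by
        have := Finset.single_le_sum
          (f := fun j => ‖w j‖ ^ p)
          (fun j _ => Real.rpow_nonneg (norm_nonneg _) _) (Finset.mem_univ j)
        have h2 : (0:ℝ) ≤ ‖w j‖ ^ p := Real.rpow_nonneg (norm_nonneg _) _
        rw [← hW] at this
        linarith [hWz ▸ this]
      have := (Real.rpow_eq_zero (norm_nonneg _) (ne_of_gt hp0)).mp h1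
      simpa using this
    have : ∑ j, w j * V.mulVec c j = 0 := by
      refine Finset.sum_eq_zero fun j _ => by rw [hw0 j, zero_mul]
    rw [this]
    simp only [norm_zero]
    positivity
  have hApos : 0 < A := lt_of_le_of_ne hA0 (Ne.symm hAz)
  have hWpos : 0 < W := lt_of_le_of_ne hW0 (Ne.symm hWz)
  -- the analytic family
  set P : ℂ → ℂ := fun z => (↑(p/2) : ℂ) * (1 + z) with hP
  set fc : ℂ → Fin n → ℂ := fun z i => if c i = 0 then 0 else (‖c i‖ : ℂ) ^ (P z - 1) * c i
    with hfc
  set fw : ℂ → Fin n → ℂ := fun z j => if w j = 0 then 0 else (‖w j‖ : ℂ) ^ (P z - 1) * w j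
    with hfw
  set F : ℂ → ℂ := fun z => ∑ j, ∑ i, fw z j * (V j i * fc z i) with hF
  have hFeq : ∀ z, F z = ∑ j, fw z j * V.mulVec (fc z) j := by
    intro z
    refine Finset.sum_congr rfl fun j _ => ?_
    rw [Matrix.mulVec, dotProduct, Finset.mul_sum]
  have hPre : ∀ z : ℂ, (P z - 1).re = (p/2) * (1 + z.re) - 1 := by
    intro z
    simp [hP, Complex.sub_re, Complex.add_re, Complex.re_ofReal_mul]
  -- modulus of the twisted vectors
  have hnormfc : ∀ (z : ℂ) i, c i ≠ 0 → ‖fc z i‖ = ‖c i‖ ^ ((p/2) * (1 + z.re)) := by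
    intro z i hci
    have hpos : (0:ℝ) < ‖c i‖ := norm_pos_iff.mpr hci
    rw [hfc]
    simp only [if_neg hci, norm_mul]
    rw [Complex.norm_cpow_eq_rpow_re_of_pos hpos, hPre]
    rw [Real.rpow_sub hpos, Real.rpow_one, div_mul_cancel₀ _ (ne_of_gt hpos)]
  have hnormfw : ∀ (z : ℂ) j, w j ≠ 0 → ‖fw z j‖ = ‖w j‖ ^ ((p/2) * (1 + z.re)) := by
    intro z j hwj
    have hpos : (0:ℝ) < ‖w j‖ := norm_pos_iff.mpr hwj
    rw [hfw]
    simp only [if_neg hwj, norm_mul]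
    rw [Complex.norm_cpow_eq_rpow_re_of_pos hpos, hPre]
    rw [Real.rpow_sub hpos, Real.rpow_one, div_mul_cancel₀ _ (ne_of_gt hpos)]
  -- differentiability
  have hPdiff : Differentiable ℂ (fun z => P z - 1) := by
    apply Differentiable.sub _ (differentiable_const _)
    exact (differentiable_const _).mul ((differentiable_const _).add differentiable_fun_id)
  have hdF : Differentiable ℂ F := by
    apply Differentiable.fun_sum; intro j _
    apply Differentiable.fun_sum; intro i _
    by_cases hwj : w j = 0
    · simp only [hfw, if_pos hwj]
      simpa using differentiable_const (0:ℂ)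
    by_cases hci : c i = 0
    · simp only [hfc, hfw, if_neg hwj, if_pos hci, mul_zero]
      exact differentiable_const 0
    · simp only [hfc, hfw, if_neg hwj, if_neg hci]
      have h1 : Differentiable ℂ (fun z => (‖c i‖ : ℂ) ^ (P z - 1)) :=
        hPdiff.const_cpow (Or.inl (by exact_mod_cast norm_ne_zero_iff.mpr hci))
      have h2 : Differentiable ℂ (fun z => (‖w j‖ : ℂ) ^ (P z - 1)) :=
        hPdiff.const_cpow (Or.inl (by exact_mod_cast norm_ne_zero_iff.mpr hwj))
      exact (h2.mul_const _).mul ((differentiable_const _).mul (h1.mul_const _))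
  -- uniform bound on the closed strip
  set bc : Fin n → ℝ := fun i => ‖c i‖ ^ (p/2) + ‖c i‖ ^ p with hbc
  set bw : Fin n → ℝ := fun j => ‖w j‖ ^ (p/2) + ‖w j‖ ^ p with hbw
  have hmono : ∀ (r e : ℝ), 0 ≤ r → p/2 ≤ e → e ≤ p → r ^ e ≤ r ^ (p/2) + r ^ p := by
    intro r e hr he1 he2
    rcases eq_or_lt_of_le hr with h0 | hrpos
    · have he0 : e ≠ 0 := ne_of_gt (lt_of_lt_of_le (by positivity) he1)
      rw [← h0, Real.zero_rpow he0, Real.zero_rpow (by positivity), Real.zero_rpow (ne_of_gt hp0)]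
      norm_num
    · rcases le_total r 1 with hr1 | hr1
      · exact le_add_of_le_of_nonneg (Real.rpow_le_rpow_of_exponent_ge hrpos hr1 he1)
          (by positivity)
      · exact le_add_of_nonneg_of_le (by positivity)
          (Real.rpow_le_rpow_of_exponent_le hr1 he2)
  have hfcb : ∀ z : ℂ, z.re ∈ Set.Icc (0:ℝ) 1 → ∀ i, ‖fc z i‖ ≤ bc i := by
    intro z hz i
    by_cases hci : c i = 0
    · simp only [hfc, if_pos hci, norm_zero, hbc]
      positivity
    · rw [hnormfc z i hci]
      have h1 : p/2 ≤ (p/2) * (1 + z.re) := by nlinarith [hz.1]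
      have h2 : (p/2) * (1 + z.re) ≤ p := by nlinarith [hz.2]
      exact hmono _ _ (norm_nonneg _) h1 h2
  have hfwb : ∀ z : ℂ, z.re ∈ Set.Icc (0:ℝ) 1 → ∀ j, ‖fw z j‖ ≤ bw j := by
    intro z hz j
    by_cases hwj : w j = 0
    · simp only [hfw, if_pos hwj, norm_zero, hbw]
      positivity
    · rw [hnormfw z j hwj]
      have h1 : p/2 ≤ (p/2) * (1 + z.re) := by nlinarith [hz.1]
      have h2 : (p/2) * (1 + z.re) ≤ p := by nlinarith [hz.2]
      exact hmono _ _ (norm_nonneg _) h1 h2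
  have hbc0 : ∀ i, 0 ≤ bc i := fun i => by rw [hbc]; positivity
  have hbw0 : ∀ j, 0 ≤ bw j := fun j => by rw [hbw]; positivity
  have hBdd : BddAbove ((norm ∘ F) '' (Complex.HadamardThreeLines.verticalClosedStrip 0 1)) := by
    refine ⟨∑ j, ∑ i, bw j * (‖V j i‖ * bc i), ?_⟩
    rintro x ⟨z, hz, rfl⟩
    have hz' : z.re ∈ Set.Icc (0:ℝ) 1 := hz
    simp only [Function.comp_apply]
    calc ‖F z‖ ≤ ∑ j, ‖∑ i, fw z j * (V j i * fc z i)‖ := norm_sum_le _ _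
      _ ≤ ∑ j, ∑ i, ‖fw z j * (V j i * fc z i)‖ :=
          Finset.sum_le_sum fun j _ => norm_sum_le _ _
      _ ≤ ∑ j, ∑ i, bw j * (‖V j i‖ * bc i) := by
          refine Finset.sum_le_sum fun j _ => Finset.sum_le_sum fun i _ => ?_
          rw [norm_mul, norm_mul]
          exact mul_le_mul (hfwb z hz' j)
            (mul_le_mul_of_nonneg_left (hfcb z hz' i) (norm_nonneg _))
            (mul_nonneg (norm_nonneg _) (norm_nonneg _)) (hbw0 j)
  -- edge computations
  have hsq0c : ∀ z : ℂ, z.re = 0 → ∀ i, ‖fc z i‖ ^ 2 = ‖c i‖ ^ p := by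
    intro z hz i
    by_cases hci : c i = 0
    · simp [hfc, if_pos hci, hci, Real.zero_rpow (ne_of_gt hp0)]
    · rw [hnormfc z i hci, hz, rpow_sq_eq (norm_nonneg _),
        show p / 2 * (1 + 0) * 2 = p by ring]
  have hsq0w : ∀ z : ℂ, z.re = 0 → ∀ j, ‖fw z j‖ ^ 2 = ‖w j‖ ^ p := by
    intro z hz j
    by_cases hwj : w j = 0
    · simp [hfw, if_pos hwj, hwj, Real.zero_rpow (ne_of_gt hp0)]
    · rw [hnormfw z j hwj, hz, rpow_sq_eq (norm_nonneg _),
        show p / 2 * (1 + 0) * 2 = p by ring]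
  have hFnorm : ∀ z, ‖F z‖ ≤ ∑ j, ‖fw z j‖ * ‖V.mulVec (fc z) j‖ := by
    intro z
    rw [hFeq z]
    refine (norm_sum_le _ _).trans (Finset.sum_le_sum fun j _ => ?_)
    rw [norm_mul]
  have ha : ∀ z ∈ Complex.re ⁻¹' {(0:ℝ)}, ‖F z‖ ≤ Real.sqrt (W * A) := by
    intro z hz
    have hz0 : z.re = 0 := hz
    have hVsum : ∑ j, ‖V.mulVec (fc z) j‖ ^ 2 = A := by
      rw [hiso (fc z), hA]
      exact Finset.sum_congr rfl fun i _ => hsq0c z hz0 i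
    have hwsum : ∑ j, ‖fw z j‖ ^ 2 = W := by
      rw [hW]
      exact Finset.sum_congr rfl fun j _ => hsq0w z hz0 j
    have h2 : (∑ j, ‖fw z j‖ * ‖V.mulVec (fc z) j‖) ^ 2 ≤ W * A := by
      have hCS := Finset.sum_mul_sq_le_sq_mul_sq Finset.univ (fun j => ‖fw z j‖)
        (fun j => ‖V.mulVec (fc z) j‖)
      rwa [hwsum, hVsum] at hCS
    have hnn : (0:ℝ) ≤ ∑ j, ‖fw z j‖ * ‖V.mulVec (fc z) j‖ :=
      Finset.sum_nonneg fun j _ => mul_nonneg (norm_nonneg _) (norm_nonneg _)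
    refine (hFnorm z).trans ?_
    exact Real.le_sqrt_of_sq_le h2
  have hnorm1c : ∀ z : ℂ, z.re = 1 → ∀ i, ‖fc z i‖ = ‖c i‖ ^ p := by
    intro z hz i
    by_cases hci : c i = 0
    · simp [hfc, if_pos hci, hci, Real.zero_rpow (ne_of_gt hp0)]
    · rw [hnormfc z i hci, hz, show p / 2 * (1 + 1) = p by ring]
  have hnorm1w : ∀ z : ℂ, z.re = 1 → ∀ j, ‖fw z j‖ = ‖w j‖ ^ p := by
    intro z hz j
    by_cases hwj : w j = 0
    · simp [hfw, if_pos hwj, hwj, Real.zero_rpow (ne_of_gt hp0)]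
    · rw [hnormfw z j hwj, hz, show p / 2 * (1 + 1) = p by ring]
  have hb : ∀ z ∈ Complex.re ⁻¹' {(1:ℝ)}, ‖F z‖ ≤ (n:ℝ) ^ (-(1/2) : ℝ) * A * W := by
    intro z hz
    have hz1 : z.re = 1 := hz
    have hrow : ∀ j, ‖V.mulVec (fc z) j‖ ≤ (n:ℝ) ^ (-(1/2) : ℝ) * A := by
      intro j
      have h1 : V.mulVec (fc z) j = ∑ i, V j i * fc z i := by
        rw [Matrix.mulVec, dotProduct]
      rw [h1]
      calc ‖∑ i, V j i * fc z i‖ ≤ ∑ i, ‖V j i‖ * ‖fc z i‖ := by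
            refine (norm_sum_le _ _).trans (Finset.sum_le_sum fun i _ => ?_)
            rw [norm_mul]
        _ ≤ ∑ i, (n:ℝ) ^ (-(1/2) : ℝ) * (‖c i‖ ^ p) := by
            refine Finset.sum_le_sum fun i _ => ?_
            rw [hnorm1c z hz1 i]
            exact mul_le_mul_of_nonneg_right (hflat j i) (Real.rpow_nonneg (norm_nonneg _) _)
        _ = (n:ℝ) ^ (-(1/2) : ℝ) * A := by rw [← Finset.mul_sum, hA]
    calc ‖F z‖ ≤ ∑ j, ‖fw z j‖ * ‖V.mulVec (fc z) j‖ := hFnorm z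
      _ ≤ ∑ j, (‖w j‖ ^ p) * ((n:ℝ) ^ (-(1/2) : ℝ) * A) := by
          refine Finset.sum_le_sum fun j _ => ?_
          rw [hnorm1w z hz1 j]
          exact mul_le_mul_of_nonneg_left (hrow j) (Real.rpow_nonneg (norm_nonneg _) _)
      _ = W * ((n:ℝ) ^ (-(1/2) : ℝ) * A) := by rw [← Finset.sum_mul, hW]
      _ = (n:ℝ) ^ (-(1/2) : ℝ) * A * W := by ring
  -- apply three lines
  have hθmem : (θ:ℂ) ∈ Complex.HadamardThreeLines.verticalClosedStrip 0 1 := by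
    simp only [Complex.HadamardThreeLines.verticalClosedStrip, Set.mem_preimage,
      Complex.ofReal_re, Set.mem_Icc]
    exact ⟨hθ0.le, hθ1.le⟩
  have h3l := Complex.HadamardThreeLines.norm_le_interp_of_mem_verticalClosedStrip' (f := F) zero_lt_one hθmem
    hdF.diffContOnCl hBdd ha hb
  have hfcθ : fc (θ:ℂ) = c := by
    funext i
    by_cases hci : c i = 0
    · simp [hfc, if_pos hci, hci]
    · simp only [hfc, if_neg hci]
      have hP1 : P (θ:ℂ) - 1 = 0 := by
        have h2 : (p/2) * (1+θ) = 1 := by rw [hp]; field_simp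
        simp only [hP]
        rw [show ((p/2 : ℝ) : ℂ) * (1 + (θ:ℂ)) = (((p/2) * (1+θ) : ℝ) : ℂ) by push_cast; ring,
          h2]
        norm_num
      rw [hP1, Complex.cpow_zero, one_mul]
  have hfwθ : fw (θ:ℂ) = w := by
    funext j
    by_cases hwj : w j = 0
    · simp [hfw, if_pos hwj, hwj]
    · simp only [hfw, if_neg hwj]
      have hP1 : P (θ:ℂ) - 1 = 0 := by
        have h2 : (p/2) * (1+θ) = 1 := by rw [hp]; field_simp
        simp only [hP]
        rw [show ((p/2 : ℝ) : ℂ) * (1 + (θ:ℂ)) = (((p/2) * (1+θ) : ℝ) : ℂ) by push_cast; ring,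
          h2]
        norm_num
      rw [hP1, Complex.cpow_zero, one_mul]
  have hFθ : F (θ:ℂ) = ∑ j, w j * V.mulVec c j := by
    rw [hFeq, hfcθ, hfwθ]
  rw [hFθ, Complex.ofReal_re] at h3l
  simpa only [sub_zero, div_one] using h3l


def ent {ι : Type*} [Fintype ι] (q : ι → ℝ) : ℝ := ∑ i, Real.negMulLog (q i)

lemma sq_rpow (x : ℝ) (α : ℝ) (hx : 0 ≤ x) : (x ^ 2) ^ α = x ^ (2 * α) := by
  rw [← Real.rpow_natCast x 2, ← Real.rpow_mul hx]
  norm_num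

lemma sum_rpow_pos {ι : Type*} [Fintype ι] {q : ι → ℝ} (hq0 : ∀ i, 0 ≤ q i)
    (hq1 : ∑ i, q i = 1) {α : ℝ} (hα : 0 < α) : 0 < ∑ i, q i ^ α := by
  obtain ⟨j, -, hj⟩ := Finset.exists_ne_zero_of_sum_ne_zero (by rw [hq1]; norm_num :
    ∑ i, q i ≠ 0)
  have hqj : 0 < q j := lt_of_le_of_ne (hq0 j) (Ne.symm hj)
  calc (0:ℝ) < q j ^ α := Real.rpow_pos_of_pos hqj α
    _ ≤ ∑ i, q i ^ α := Finset.single_le_sum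
        (fun i _ => Real.rpow_nonneg (hq0 i) α) (Finset.mem_univ j)

/-- Rényi-β entropy is at most Shannon entropy for `β > 1`. -/
lemma renyi_le_ent {ι : Type*} [Fintype ι] {q : ι → ℝ} (hq0 : ∀ i, 0 ≤ q i)
    (hq1 : ∑ i, q i = 1) {β : ℝ} (hβ : 1 < β) :
    (1 - β)⁻¹ * Real.log (∑ i, q i ^ β) ≤ ent q := by
  classical
  set T : Finset ι := Finset.univ.filter (fun j => q j ≠ 0) with hT
  have hsumT : ∑ j ∈ T, q j = 1 := by
    rw [hT, Finset.sum_filter_ne_zero, hq1]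
  have hqT : ∀ j ∈ T, 0 < q j := by
    intro j hj
    rw [hT, Finset.mem_filter] at hj
    exact lt_of_le_of_ne (hq0 j) (Ne.symm hj.2)
  have hkey := (strictConcaveOn_log_Ioi.concaveOn).le_map_sum
    (t := T) (w := fun j => q j) (p := fun j => q j ^ (β - 1))
    (fun j _ => hq0 j) hsumT
    (fun j hj => Set.mem_Ioi.mpr (Real.rpow_pos_of_pos (hqT j hj) _))
  have hL : ∑ j ∈ T, q j • Real.log (q j ^ (β - 1))
      = (β - 1) * ∑ i, q i * Real.log (q i) := by
    rw [Finset.mul_sum]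
    rw [show ∑ i, (β - 1) * (q i * Real.log (q i))
        = ∑ i ∈ T, (β - 1) * (q i * Real.log (q i)) by
      rw [hT]
      refine (Finset.sum_filter_of_ne fun i _ h => ?_).symm
      intro h0
      rw [h0] at h
      simp at h]
    refine Finset.sum_congr rfl fun j hj => ?_
    rw [smul_eq_mul, Real.log_rpow (hqT j hj)]
    ring
  have hR : ∑ j ∈ T, q j • q j ^ (β - 1) = ∑ i, q i ^ β := by
    rw [show ∑ i, q i ^ β = ∑ i ∈ T, q i ^ β by
      rw [hT]
      refine (Finset.sum_filter_of_ne fun i _ h => ?_).symm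
      intro h0
      rw [h0, Real.zero_rpow (by linarith)] at h
      exact h rfl]
    refine Finset.sum_congr rfl fun j hj => ?_
    rw [smul_eq_mul]
    nth_rewrite 1 [← Real.rpow_one (q j)]
    rw [← Real.rpow_add (hqT j hj)]
    norm_num
  rw [hL, hR] at hkey
  have hinv : (1 - β)⁻¹ ≤ 0 := by
    apply inv_nonpos.mpr; linarith
  have h2 := mul_le_mul_of_nonpos_left hkey hinv
  have h3 : (1 - β)⁻¹ * ((β - 1) * ∑ i, q i * Real.log (q i))
      = -(∑ i, q i * Real.log (q i)) := by
    have hne : (1:ℝ) - β ≠ 0 := by linarith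
    field_simp
    ring
  rw [h3] at h2
  refine le_trans h2 ?_
  rw [ent, ← Finset.sum_neg_distrib]
  refine le_of_eq (Finset.sum_congr rfl fun i _ => ?_)
  rw [Real.negMulLog]
  ring

/-- Hausdorff–Young in logarithmic form. -/
lemma log_HY {n : ℕ} (hn : 0 < n) (V : Matrix (Fin n) (Fin n) ℂ)
    (hiso : ∀ x : Fin n → ℂ, ∑ j, ‖V.mulVec x j‖ ^ 2 = ∑ i, ‖x i‖ ^ 2)
    (hflat : ∀ j i, ‖V j i‖ ≤ (n : ℝ) ^ (-(1/2) : ℝ))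
    {θ : ℝ} (hθ0 : 0 < θ) (hθ1 : θ < 1) (c : Fin n → ℂ)
    (hApos : 0 < ∑ i, ‖c i‖ ^ (2/(1+θ)))
    (hBpos : 0 < ∑ j, ‖V.mulVec c j‖ ^ (2/(1-θ))) :
    ((1-θ)/2) * Real.log (∑ j, ‖V.mulVec c j‖ ^ (2/(1-θ)))
      ≤ ((1+θ)/2) * Real.log (∑ i, ‖c i‖ ^ (2/(1+θ))) - (θ/2) * Real.log n := by
  have h1θ : (0:ℝ) < 1 + θ := by linarith
  have h1θ' : (0:ℝ) < 1 - θ := by linarith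
  set p : ℝ := 2/(1+θ) with hp
  set q : ℝ := 2/(1-θ) with hq
  have hq2 : 2 < q := by
    rw [hq, lt_div_iff₀ h1θ']; nlinarith
  set v : Fin n → ℂ := V.mulVec c with hv
  set A : ℝ := ∑ i, ‖c i‖ ^ p with hA
  set Bq : ℝ := ∑ j, ‖v j‖ ^ q with hBq
  set w : Fin n → ℂ := fun j => ((‖v j‖ ^ (q-2) : ℝ) : ℂ) * (starRingEnd ℂ) (v j) with hw
  have hwv : ∀ j, w j * v j = ((‖v j‖ ^ q : ℝ) : ℂ) := by
    intro j
    by_cases hvj : v j = 0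
    · rw [hw]
      simp [hvj, Real.zero_rpow (by positivity : q ≠ 0)]
    · have hvpos : (0:ℝ) < ‖v j‖ := norm_pos_iff.mpr hvj
      rw [hw]
      have : (starRingEnd ℂ) (v j) * v j = ((‖v j‖ ^ (2:ℕ) : ℝ) : ℂ) := by
        rw [mul_comm, Complex.mul_conj, Complex.normSq_eq_norm_sq]
      rw [mul_assoc, this]
      rw [← Complex.ofReal_mul]
      congr 1
      rw [← Real.rpow_natCast ‖v j‖ 2, ← Real.rpow_add hvpos]
      norm_num
  have hsumwv : ∑ j, w j * v j = ((Bq : ℝ) : ℂ) := by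
    rw [hBq, Complex.ofReal_sum]
    exact Finset.sum_congr rfl fun j _ => hwv j
  have hnormw : ∀ j, ‖w j‖ ^ p = ‖v j‖ ^ q := by
    intro j
    by_cases hvj : v j = 0
    · rw [hw]
      simp [hvj, Real.zero_rpow (ne_of_gt (by linarith : (0:ℝ) < q)),
        Real.zero_rpow (ne_of_gt (by linarith : (0:ℝ) < q - 2)),
        Real.zero_rpow (ne_of_gt (by rw [hp]; positivity : (0:ℝ) < p))]
    · have hvpos : (0:ℝ) < ‖v j‖ := norm_pos_iff.mpr hvj
      have h1 : ‖w j‖ = ‖v j‖ ^ (q - 1) := by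
        rw [hw, norm_mul, RCLike.norm_conj, Complex.norm_real, Real.norm_eq_abs,
          _root_.abs_of_nonneg (Real.rpow_nonneg (norm_nonneg _) _)]
        nth_rewrite 2 [← Real.rpow_one (‖v j‖)]
        rw [← Real.rpow_add hvpos, show q - 2 + 1 = q - 1 by ring]
      rw [h1, ← Real.rpow_mul (norm_nonneg _)]
      congr 1
      rw [hq, hp]
      field_simp
      ring
  have hW : ∑ j, ‖w j‖ ^ p = Bq := by
    rw [hBq]; exact Finset.sum_congr rfl fun j _ => hnormw j
  have hbil := bilinear V hiso hflat hθ0 hθ1 c w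
  rw [hsumwv] at hbil
  rw [Complex.norm_real, Real.norm_eq_abs, _root_.abs_of_pos hBpos] at hbil
  rw [hW] at hbil
  have hnpos : (0:ℝ) < n := by exact_mod_cast hn
  have hsqpos : (0:ℝ) < Real.sqrt (Bq * A) := Real.sqrt_pos.mpr (by positivity)
  have hmpos : (0:ℝ) < (n:ℝ) ^ (-(1/2) : ℝ) * A * Bq := by positivity
  have hlog := Real.log_le_log hBpos hbil
  rw [Real.log_mul (by positivity) (by positivity),
    Real.log_rpow hsqpos, Real.log_rpow hmpos,
    Real.log_sqrt (by positivity),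
    Real.log_mul (ne_of_gt hBpos) (ne_of_gt hApos),
    Real.log_mul (by positivity) (ne_of_gt hBpos),
    Real.log_mul (by positivity) (ne_of_gt hApos),
    Real.log_rpow hnpos] at hlog
  linarith


set_option maxHeartbeats 1000000 in
/-- Entropic uncertainty for a flat isometry: `H(p) + H(q) ≥ log n`. -/
lemma ent_sum_ge {n : ℕ} (hn : 0 < n) (V : Matrix (Fin n) (Fin n) ℂ)
    (hiso : ∀ x : Fin n → ℂ, ∑ j, ‖V.mulVec x j‖ ^ 2 = ∑ i, ‖x i‖ ^ 2)
    (hflat : ∀ j i, ‖V j i‖ ≤ (n : ℝ) ^ (-(1/2) : ℝ))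
    (c : Fin n → ℂ) (hc : ∑ i, ‖c i‖ ^ 2 = 1) :
    Real.log n ≤ ent (fun i => ‖c i‖ ^ 2) + ent (fun j => ‖V.mulVec c j‖ ^ 2) := by
  set pv : Fin n → ℝ := fun i => ‖c i‖ ^ 2 with hpv
  set qv : Fin n → ℝ := fun j => ‖V.mulVec c j‖ ^ 2 with hqv
  have hp0 : ∀ i, 0 ≤ pv i := fun i => by simp only [hpv]; positivity
  have hq0 : ∀ j, 0 ≤ qv j := fun j => by simp only [hqv]; positivity
  have hp1 : ∑ i, pv i = 1 := hc
  have hq1 : ∑ j, qv j = 1 := by simp only [hqv]; rw [hiso c]; exact hc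
  have claim : ∀ α : ℝ, α ∈ Set.Ioo (1/2 : ℝ) 1 →
      Real.log n - ent qv ≤ (1 - α)⁻¹ * Real.log (∑ i, pv i ^ α) := by
    intro α hα
    obtain ⟨hα1, hα2⟩ := hα
    have hαpos : (0:ℝ) < α := by linarith
    set θ : ℝ := (1 - α)/α with hθ
    have hθ0 : 0 < θ := div_pos (by linarith) hαpos
    have hθ1 : θ < 1 := by rw [hθ, div_lt_one hαpos]; linarith
    have h1pθ : 1 + θ = 1/α := by rw [hθ]; field_simp; ring
    have h1mθpos : (0:ℝ) < 1 - θ := by linarith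
    set β : ℝ := (1-θ)⁻¹ with hβ
    have hβ1 : 1 < β := by
      rw [hβ]
      rw [lt_inv_comm₀ one_pos h1mθpos]
      simpa using hθ0
    have hβpos : 0 < β := by linarith
    have hep : 2/(1+θ) = 2*α := by rw [h1pθ]; field_simp
    have heq2 : 2/(1-θ) = 2*β := by rw [hβ, div_eq_mul_inv]
    have ec : (∑ i, ‖c i‖ ^ (2/(1+θ))) = ∑ i, pv i ^ α := by
      refine Finset.sum_congr rfl fun i _ => ?_
      rw [hep]
      exact (sq_rpow _ _ (norm_nonneg _)).symm
    have eq' : (∑ j, ‖V.mulVec c j‖ ^ (2/(1-θ))) = ∑ j, qv j ^ β := by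
      refine Finset.sum_congr rfl fun j _ => ?_
      rw [heq2]
      exact (sq_rpow _ _ (norm_nonneg _)).symm
    have hApos : 0 < ∑ i, ‖c i‖ ^ (2/(1+θ)) := by
      rw [ec]; exact sum_rpow_pos hp0 hp1 hαpos
    have hBpos : 0 < ∑ j, ‖V.mulVec c j‖ ^ (2/(1-θ)) := by
      rw [eq']; exact sum_rpow_pos hq0 hq1 hβpos
    have hHY := log_HY hn V hiso hflat hθ0 hθ1 c hApos hBpos
    rw [ec, eq'] at hHY
    have hren := renyi_le_ent hq0 hq1 hβ1
    set LSp := Real.log (∑ i, pv i ^ α) with hLSp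
    set LSq := Real.log (∑ j, qv j ^ β) with hLSq
    have hθne : θ ≠ 0 := ne_of_gt hθ0
    have h1mθne : (1:ℝ) - θ ≠ 0 := ne_of_gt h1mθpos
    have hf1 : (1 - β)⁻¹ = -((1-θ)/θ) := by
      rw [hβ, show 1 - (1-θ)⁻¹ = -(θ/(1-θ)) by field_simp; ring, inv_neg, inv_div]
    have hf2 : (1 - α)⁻¹ = (1+θ)/θ := by
      rw [h1pθ, hθ]
      have a : α ≠ 0 := by linarith
      have b : (1:ℝ) - α ≠ 0 := by linarith
      field_simp
    rw [hf2]
    have hkey : Real.log n ≤ (1+θ)/θ * LSp - (1-θ)/θ * LSq := by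
      have h2 : (θ/2) * Real.log n ≤ ((1+θ)/2) * LSp - ((1-θ)/2) * LSq := by linarith
      have h3 := mul_le_mul_of_nonneg_left h2 (le_of_lt (by positivity : (0:ℝ) < 2/θ))
      calc Real.log n = (2/θ) * ((θ/2) * Real.log n) := by field_simp
        _ ≤ (2/θ) * (((1+θ)/2) * LSp - ((1-θ)/2) * LSq) := h3
        _ = (1+θ)/θ * LSp - (1-θ)/θ * LSq := by field_simp
    have hren' : -((1-θ)/θ) * LSq ≤ ent qv := by rw [← hf1]; exact hren
    linarith
  -- the limit α → 1⁻
  have hg : HasDerivAt (fun α : ℝ => ∑ i, pv i ^ α) (∑ i, pv i * Real.log (pv i)) 1 := by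
    refine HasDerivAt.fun_sum fun i _ => ?_
    by_cases hpi : pv i = 0
    · have hev : (fun α : ℝ => pv i ^ α) =ᶠ[𝓝 (1:ℝ)] fun _ => (0:ℝ) := by
        filter_upwards [eventually_ne_nhds (by norm_num : (1:ℝ) ≠ 0)] with α hα
        rw [hpi, Real.zero_rpow hα]
      have h0 : HasDerivAt (fun _ : ℝ => (0:ℝ)) 0 1 := hasDerivAt_const 1 0
      have h1 := h0.congr_of_eventuallyEq hev
      have hval : pv i * Real.log (pv i) = 0 := by rw [hpi]; simp
      rw [hval]
      exact h1
    · have hppos : 0 < pv i := lt_of_le_of_ne (hp0 i) (Ne.symm hpi)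
      have h := (Real.hasStrictDerivAt_const_rpow hppos 1).hasDerivAt
      rwa [Real.rpow_one] at h
  have hgs : (∑ i, pv i ^ (1:ℝ)) = 1 := by
    simp only [Real.rpow_one]; exact hp1
  have hlogd : HasDerivAt (fun α : ℝ => Real.log (∑ i, pv i ^ α))
      ((∑ i, pv i * Real.log (pv i)) / (∑ i, pv i ^ (1:ℝ))) 1 :=
    hg.log (by rw [hgs]; norm_num)
  rw [hgs, div_one] at hlogd
  have hslope := hasDerivAt_iff_tendsto_slope.mp hlogd
  have hmono : (𝓝[<] (1:ℝ)) ≤ (𝓝[≠] (1:ℝ)) :=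
    nhdsWithin_mono _ (fun x hx => ne_of_lt hx)
  have hentp : ent pv = -(∑ i, pv i * Real.log (pv i)) := by
    rw [ent, ← Finset.sum_neg_distrib]
    exact Finset.sum_congr rfl fun i _ => by rw [Real.negMulLog]; ring
  have hslope' : Filter.Tendsto (fun α => (1-α)⁻¹ * Real.log (∑ i, pv i ^ α)) (𝓝[<] (1:ℝ))
      (𝓝 (ent pv)) := by
    rw [hentp]
    refine Filter.Tendsto.congr' ?_ ((hslope.mono_left hmono).neg)
    filter_upwards [self_mem_nhdsWithin] with α (hα : α < 1)
    have hne : α - 1 ≠ 0 := by intro h; apply absurd hα; rw [show α = 1 by linarith]; simp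
    have hne2 : (1:ℝ) - α ≠ 0 := by intro h; apply hne; linarith
    rw [slope_def_field, hgs, Real.log_one]
    field_simp
    ring
  have hev : ∀ᶠ α in 𝓝[<] (1:ℝ),
      Real.log n - ent qv ≤ (1-α)⁻¹ * Real.log (∑ i, pv i ^ α) := by
    filter_upwards [Ioo_mem_nhdsLT_of_mem (show (1:ℝ) ∈ Set.Ioc (1/2) 1 by norm_num)] with α hα
    exact claim α hα
  have hfin := ge_of_tendsto hslope' hev
  linarith


lemma ent_congr {ι : Type*} [Fintype ι] {f g : ι → ℝ} (h : ∀ i, f i = g i) : ent f = ent g := by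
  rw [ent, ent]
  exact Finset.sum_congr rfl fun i _ => by rw [h i]

lemma pure_MU {d : ℕ} (hd : 0 < d) {B₁ B₂ : Fin d → Fin d → ℂ}
    (hB₁ : IsONB B₁) (hB₂ : IsONB B₂) (hMUB : AreMUB B₁ B₂)
    (u : Fin d → ℂ) (hu : ∑ i, ‖star u ⬝ᵥ B₁ i‖ ^ 2 = 1) :
    Real.log d ≤ ent (fun i => ‖star u ⬝ᵥ B₁ i‖ ^ 2)
      + ent (fun j => ‖star u ⬝ᵥ B₂ j‖ ^ 2) := by
  classical
  set V : Matrix (Fin d) (Fin d) ℂ := Matrix.of (fun j i => star (B₂ j) ⬝ᵥ B₁ i) with hV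
  set c : Fin d → ℂ := fun i => star (B₁ i) ⬝ᵥ u with hc
  have hVc : V.mulVec c = fun j => star (B₂ j) ⬝ᵥ u := by
    funext j
    rw [Matrix.mulVec, dotProduct]
    exact (dot_expand hB₁ (B₂ j) u).symm
  have hVV : Vᴴ * V = 1 := by
    ext i i'
    rw [Matrix.mul_apply]
    simp only [Matrix.conjTranspose_apply, hV, Matrix.of_apply, RCLike.star_def]
    rw [Finset.sum_congr rfl fun j _ => by
      rw [show (starRingEnd ℂ) (star (B₂ j) ⬝ᵥ B₁ i) = star (B₁ i) ⬝ᵥ B₂ j from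
        (dot_conj (B₁ i) (B₂ j)).symm]]
    rw [← dot_expand hB₂ (B₁ i) (B₁ i'), hB₁ i i', Matrix.one_apply]
  have hiso : ∀ x : Fin d → ℂ, ∑ j, ‖V.mulVec x j‖ ^ 2 = ∑ i, ‖x i‖ ^ 2 := by
    intro x
    rw [← re_dot_self, ← re_dot_self]
    congr 1
    rw [Matrix.star_mulVec, Matrix.dotProduct_mulVec, Matrix.vecMul_vecMul, hVV,
      Matrix.vecMul_one]
  have hdpos : (0:ℝ) < d := by exact_mod_cast hd
  have hflat : ∀ j i, ‖V j i‖ ≤ (d:ℝ) ^ (-(1/2) : ℝ) := by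
    intro j i
    have h1 : ‖V j i‖ ^ 2 = 1/(d:ℝ) := by
      rw [hV]
      show ‖star (B₂ j) ⬝ᵥ B₁ i‖ ^ 2 = 1/(d:ℝ)
      rw [norm_dot_conj]
      exact hMUB i j
    have h2 : ‖V j i‖ = Real.sqrt (1/(d:ℝ)) := by
      rw [← h1, Real.sqrt_sq (norm_nonneg _)]
    rw [h2, one_div, Real.sqrt_inv, Real.sqrt_eq_rpow, ← Real.rpow_neg (le_of_lt hdpos)]
  have hc2 : ∑ i, ‖c i‖ ^ 2 = 1 := by
    rw [← hu]
    exact Finset.sum_congr rfl fun i _ => by rw [hc, norm_dot_conj]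
  have h := ent_sum_ge hd V hiso hflat c hc2
  have e1 : ent (fun i => ‖c i‖ ^ 2) = ent (fun i => ‖star u ⬝ᵥ B₁ i‖ ^ 2) :=
    ent_congr fun i => by rw [hc, norm_dot_conj]
  have e2 : ent (fun j => ‖V.mulVec c j‖ ^ 2) = ent (fun j => ‖star u ⬝ᵥ B₂ j‖ ^ 2) :=
    ent_congr fun j => by rw [hVc, norm_dot_conj]
  rw [e1, e2] at h
  exact h

lemma ent_mix {ι κ : Type*} [Fintype ι] [Fintype κ] (w : κ → ℝ) (hw : ∀ k, 0 ≤ w k)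
    (hw1 : ∑ k, w k = 1) (π : κ → ι → ℝ) (hπ : ∀ k i, 0 ≤ π k i) :
    ∑ k, w k * ent (π k) ≤ ent (fun i => ∑ k, w k * π k i) := by
  rw [show ∑ k, w k * ent (π k) = ∑ i, ∑ k, w k * Real.negMulLog (π k i) by
    rw [Finset.sum_comm]
    exact Finset.sum_congr rfl fun k _ => by rw [ent, Finset.mul_sum]]
  refine Finset.sum_le_sum fun i _ => ?_
  have := Real.concaveOn_negMulLog.le_map_sum (t := Finset.univ) (w := w)
    (p := fun k => π k i) (fun k _ => hw k) hw1 (fun k _ => Set.mem_Ici.mpr (hπ k i))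
  simpa [smul_eq_mul] using this

set_option maxHeartbeats 1000000 in
lemma mixed_MU {d : ℕ} (hd : 0 < d) {B₁ B₂ : Fin d → Fin d → ℂ}
    (hB₁ : IsONB B₁) (hB₂ : IsONB B₂) (hMUB : AreMUB B₁ B₂)
    {E : Matrix (Fin d) (Fin d) ℂ} (hE : E.PosSemidef)
    {T : ℝ} (hT1 : T = ∑ i, outProb E (B₁ i)) (hTpos : 0 < T) :
    Real.log d ≤ ent (fun i => outProb E (B₁ i) / T)
      + ent (fun j => outProb E (B₂ j) / T) := by
  classical
  obtain ⟨A, hA⟩ : ∃ A : Matrix (Fin d) (Fin d) ℂ, E = Aᴴ * A := by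
    open scoped MatrixOrder in exact CStarAlgebra.nonneg_iff_eq_star_mul_self.mp hE.nonneg
  set u : Fin d → Fin d → ℂ := fun k l => (starRingEnd ℂ) (A k l) with hu
  have hdot : ∀ (x : Fin d → ℂ) (k : Fin d), star (u k) ⬝ᵥ x = A.mulVec x k := by
    intro x k
    simp only [dotProduct, Matrix.mulVec, Pi.star_apply, hu, RCLike.star_def,
      Complex.conj_conj]
  have hout : ∀ v : Fin d → ℂ, outProb E v = ∑ k, ‖star (u k) ⬝ᵥ v‖ ^ 2 := by
    intro v
    rw [show outProb E v = (star v ⬝ᵥ E.mulVec v).re from rfl, hA,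
      ← Matrix.mulVec_mulVec, Matrix.dotProduct_mulVec, ← Matrix.star_mulVec,
      re_dot_self]
    exact Finset.sum_congr rfl fun k _ => by rw [hdot v k]
  set μ : Fin d → ℝ := fun k => ∑ i, ‖star (u k) ⬝ᵥ B₁ i‖ ^ 2 with hμ
  have hμ0 : ∀ k, 0 ≤ μ k :=
    fun k => Finset.sum_nonneg fun i _ => by positivity
  have hμ2 : ∀ k, ∑ j, ‖star (u k) ⬝ᵥ B₂ j‖ ^ 2 = μ k := by
    intro k
    rw [parseval hB₂, ← parseval hB₁]
  have hTμ : ∑ k, μ k = T := by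
    rw [Finset.sum_comm, hT1]
    exact Finset.sum_congr rfl fun i _ => (hout (B₁ i)).symm
  set ω : Fin d → ℝ := fun k => μ k / T with hω
  have hω0 : ∀ k, 0 ≤ ω k := fun k => div_nonneg (hμ0 k) hTpos.le
  have hω1 : ∑ k, ω k = 1 := by
    simp only [hω]
    rw [← Finset.sum_div, hTμ, div_self (ne_of_gt hTpos)]
  set π₁ : Fin d → Fin d → ℝ := fun k i => ‖star (u k) ⬝ᵥ B₁ i‖ ^ 2 / μ k with hπ₁
  set π₂ : Fin d → Fin d → ℝ := fun k j => ‖star (u k) ⬝ᵥ B₂ j‖ ^ 2 / μ k with hπ₂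
  have hπ₁0 : ∀ k i, 0 ≤ π₁ k i := fun k i => div_nonneg (by positivity) (hμ0 k)
  have hπ₂0 : ∀ k j, 0 ≤ π₂ k j := fun k j => div_nonneg (by positivity) (hμ0 k)
  have hzero : ∀ k, μ k = 0 → ∀ i, ‖star (u k) ⬝ᵥ B₁ i‖ ^ 2 = 0 := by
    intro k hk i
    have hle : ‖star (u k) ⬝ᵥ B₁ i‖ ^ 2 ≤ μ k := by
      rw [hμ]
      exact Finset.single_le_sum (f := fun i => ‖star (u k) ⬝ᵥ B₁ i‖ ^ 2)
        (fun i _ => by positivity) (Finset.mem_univ i)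
    have h0 : (0:ℝ) ≤ ‖star (u k) ⬝ᵥ B₁ i‖ ^ 2 := by positivity
    linarith [hk ▸ hle]
  have hzero2 : ∀ k, μ k = 0 → ∀ j, ‖star (u k) ⬝ᵥ B₂ j‖ ^ 2 = 0 := by
    intro k hk j
    have hle : ‖star (u k) ⬝ᵥ B₂ j‖ ^ 2 ≤ μ k := by
      rw [← hμ2 k]
      exact Finset.single_le_sum (f := fun j => ‖star (u k) ⬝ᵥ B₂ j‖ ^ 2)
        (fun j _ => by positivity) (Finset.mem_univ j)
    have h0 : (0:ℝ) ≤ ‖star (u k) ⬝ᵥ B₂ j‖ ^ 2 := by positivity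
    linarith [hk ▸ hle]
  have hid1 : ∀ i, outProb E (B₁ i) / T = ∑ k, ω k * π₁ k i := by
    intro i
    rw [hout (B₁ i), Finset.sum_div]
    refine Finset.sum_congr rfl fun k _ => ?_
    by_cases hk : μ k = 0
    · rw [hzero k hk i]
      simp only [hω, hπ₁, hzero k hk i, hk]
      simp
    · simp only [hω, hπ₁]
      field_simp
  have hid2 : ∀ j, outProb E (B₂ j) / T = ∑ k, ω k * π₂ k j := by
    intro j
    rw [hout (B₂ j), Finset.sum_div]
    refine Finset.sum_congr rfl fun k _ => ?_
    by_cases hk : μ k = 0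
    · rw [hzero2 k hk j]
      simp only [hω, hπ₂, hzero2 k hk j, hk]
      simp
    · simp only [hω, hπ₂]
      field_simp
  have hmix1 := ent_mix ω hω0 hω1 π₁ hπ₁0
  have hmix2 := ent_mix ω hω0 hω1 π₂ hπ₂0
  have he1 : ent (fun i => outProb E (B₁ i) / T) = ent (fun i => ∑ k, ω k * π₁ k i) :=
    ent_congr fun i => hid1 i
  have he2 : ent (fun j => outProb E (B₂ j) / T) = ent (fun j => ∑ k, ω k * π₂ k j) :=
    ent_congr fun j => hid2 j
  have hpure : ∀ k, ω k * Real.log d ≤ ω k * (ent (π₁ k) + ent (π₂ k)) := by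
    intro k
    by_cases hk : μ k = 0
    · have hω' : ω k = 0 := by simp [hω, hk]
      rw [hω']
      simp
    · have hμpos : 0 < μ k := lt_of_le_of_ne (hμ0 k) (Ne.symm hk)
      refine mul_le_mul_of_nonneg_left ?_ (hω0 k)
      set s : ℝ := (Real.sqrt (μ k))⁻¹ with hs
      set v : Fin d → ℂ := fun l => (s:ℂ) * u k l with hv
      have hsv : ∀ x : Fin d → ℂ, star v ⬝ᵥ x = (s:ℂ) * (star (u k) ⬝ᵥ x) := by
        intro x
        simp only [dotProduct, hv, Pi.star_apply, RCLike.star_def, _root_.map_mul,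
          Complex.conj_ofReal, Finset.mul_sum]
        exact Finset.sum_congr rfl fun l _ => by ring
      have hsq : ∀ x : Fin d → ℂ, ‖star v ⬝ᵥ x‖ ^ 2 = ‖star (u k) ⬝ᵥ x‖ ^ 2 / μ k := by
        intro x
        rw [hsv, norm_mul, mul_pow, Complex.norm_real, Real.norm_eq_abs,
          _root_.abs_of_nonneg (by positivity : (0:ℝ) ≤ s), hs, inv_pow,
          Real.sq_sqrt (hμ0 k), div_eq_inv_mul]
      have hnorm : ∑ i, ‖star v ⬝ᵥ B₁ i‖ ^ 2 = 1 := by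
        rw [Finset.sum_congr rfl fun i _ => hsq (B₁ i), ← Finset.sum_div,
          show (∑ i, ‖star (u k) ⬝ᵥ B₁ i‖ ^ 2) = μ k from rfl,
          div_self (ne_of_gt hμpos)]
      have hP := pure_MU hd hB₁ hB₂ hMUB v hnorm
      have e1 : ent (fun i => ‖star v ⬝ᵥ B₁ i‖ ^ 2) = ent (π₁ k) :=
        ent_congr fun i => by rw [hsq (B₁ i)]
      have e2 : ent (fun j => ‖star v ⬝ᵥ B₂ j‖ ^ 2) = ent (π₂ k) :=
        ent_congr fun j => by rw [hsq (B₂ j)]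
      rw [e1, e2] at hP
      exact hP
  calc Real.log d = ∑ k, ω k * Real.log d := by rw [← Finset.sum_mul, hω1, one_mul]
    _ ≤ ∑ k, ω k * (ent (π₁ k) + ent (π₂ k)) := Finset.sum_le_sum fun k _ => hpure k
    _ = ∑ k, ω k * ent (π₁ k) + ∑ k, ω k * ent (π₂ k) := by
        rw [← Finset.sum_add_distrib]
        exact Finset.sum_congr rfl fun k _ => by ring
    _ ≤ ent (fun i => ∑ k, ω k * π₁ k i) + ent (fun j => ∑ k, ω k * π₂ k j) :=
        add_le_add hmix1 hmix2
    _ = _ := by rw [← he1, ← he2]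


lemma shannon_eq_ent {ι : Type*} [Fintype ι] (q : ι → ℝ) :
    shannonEntropy q = ent q / Real.log 2 := by
  rw [shannonEntropy, ent, Finset.sum_div, ← Finset.sum_neg_distrib]
  refine Finset.sum_congr rfl fun i _ => ?_
  rw [Real.negMulLog, Real.logb]
  ring

lemma shannon_uniform (d : ℕ) (hd : 0 < d) :
    shannonEntropy (fun _ : Fin d => 1/(d:ℝ)) = Real.logb 2 d := by
  have hdR : (0:ℝ) < d := by exact_mod_cast hd
  rw [shannonEntropy]
  simp only [one_div, Real.logb_inv]
  rw [Finset.sum_const, Finset.card_univ, Fintype.card_fin, nsmul_eq_mul]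
  field_simp


end MUBAux

/-- Two MUBs, uniform priors: `I₁ + I₂ ≤ log₂ d`. -/
theorem two_mub_uniform_info_bound
    {S : Type*} [Fintype S] (d : ℕ) (hd : 2 ≤ d)
    (B₁ B₂ : Fin d → Fin d → ℂ)
    (hB₁ : IsONB B₁) (hB₂ : IsONB B₂) (hMUB : AreMUB B₁ B₂)
    (E : S → Matrix (Fin d) (Fin d) ℂ) (hE : IsPOVM E) :
    mutInfo B₁ (fun _ => 1 / (d : ℝ)) E + mutInfo B₂ (fun _ => 1 / (d : ℝ)) E
      ≤ Real.logb 2 d := by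
  classical
  obtain ⟨hpsd, hsum⟩ := hE
  have hd0 : 0 < d := by omega
  have hdR : (0:ℝ) < d := by exact_mod_cast hd0
  set o₁ : S → Fin d → ℝ := fun s i => outProb (E s) (B₁ i) with ho₁
  set o₂ : S → Fin d → ℝ := fun s j => outProb (E s) (B₂ j) with ho₂
  set T : S → ℝ := fun s => ∑ i, o₁ s i with hT
  have hTr : ∀ s, T s = (Matrix.trace (E s)).re := by
    intro s
    simp only [hT, ho₁, outProb]
    rw [← Complex.re_sum, MUBAux.sum_dot_mulVec hB₁ (E s)]
  have hT2 : ∀ s, ∑ j, o₂ s j = T s := by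
    intro s
    rw [hTr s]
    simp only [ho₂, outProb]
    rw [← Complex.re_sum, MUBAux.sum_dot_mulVec hB₂ (E s)]
  have ho1nn : ∀ s i, 0 ≤ o₁ s i := by
    intro s i
    have := (hpsd s).re_dotProduct_nonneg (B₁ i)
    simpa [ho₁, outProb] using this
  have ho2nn : ∀ s j, 0 ≤ o₂ s j := by
    intro s j
    have := (hpsd s).re_dotProduct_nonneg (B₂ j)
    simpa [ho₂, outProb] using this
  have hTnn : ∀ s, 0 ≤ T s := fun s => Finset.sum_nonneg fun i _ => ho1nn s i
  have hTsum : ∑ s, T s = d := by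
    rw [Finset.sum_congr rfl fun s _ => hTr s, ← Complex.re_sum, ← Matrix.trace_sum,
      hsum, Matrix.trace_one]
    simp
  have hmut : ∀ (B : Fin d → Fin d → ℂ), (∀ s, (∑ i, outProb (E s) (B i)) = T s) →
      mutInfo B (fun _ => 1/(d:ℝ)) E = Real.logb 2 d -
        ∑ s, (T s / d) * shannonEntropy (fun i => outProb (E s) (B i) / T s) := by
    intro B hTB
    rw [mutInfo, MUBAux.shannon_uniform d hd0]
    congr 1
    refine Finset.sum_congr rfl fun s _ => ?_
    have hcoeff : ∑ i, (1/(d:ℝ)) * outProb (E s) (B i) = T s / d := by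
      rw [← Finset.mul_sum, hTB s]
      ring
    rw [hcoeff]
    have harg : (fun i => 1/(d:ℝ) * outProb (E s) (B i) / (T s / d))
        = (fun i => outProb (E s) (B i) / T s) := by
      funext i
      rw [show T s / (d:ℝ) = (1/(d:ℝ)) * T s by ring,
        mul_div_mul_left _ _ (by positivity : (1:ℝ)/(d:ℝ) ≠ 0)]
    rw [harg]
  rw [hmut B₁ (fun s => rfl), hmut B₂ (fun s => hT2 s)]
  have key : Real.logb 2 d ≤
      ∑ s, (T s / d) * shannonEntropy (fun i => outProb (E s) (B₁ i) / T s)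
      + ∑ s, (T s / d) * shannonEntropy (fun j => outProb (E s) (B₂ j) / T s) := by
    have pers : ∀ s, (T s / d) * Real.logb 2 d ≤
        (T s / d) * shannonEntropy (fun i => outProb (E s) (B₁ i) / T s)
        + (T s / d) * shannonEntropy (fun j => outProb (E s) (B₂ j) / T s) := by
      intro s
      rcases eq_or_lt_of_le (hTnn s) with h0 | hpos
      · rw [← h0]
        simp
      · have hm := MUBAux.mixed_MU hd0 hB₁ hB₂ hMUB (hpsd s) (rfl :
          T s = ∑ i, outProb (E s) (B₁ i)) hpos
        have hlog2 : (0:ℝ) < Real.log 2 := Real.log_pos (by norm_num)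
        have hsh : Real.logb 2 d ≤ shannonEntropy (fun i => outProb (E s) (B₁ i) / T s)
            + shannonEntropy (fun j => outProb (E s) (B₂ j) / T s) := by
          rw [MUBAux.shannon_eq_ent, MUBAux.shannon_eq_ent, Real.logb, ← add_div]
          exact (div_le_div_iff_of_pos_right hlog2).mpr hm
        rw [← mul_add]
        exact mul_le_mul_of_nonneg_left hsh (by positivity)
    calc Real.logb 2 d = ∑ s, (T s / d) * Real.logb 2 d := by
          rw [← Finset.sum_mul, ← Finset.sum_div, hTsum, div_self (ne_of_gt hdR), one_mul]
      _ ≤ ∑ s, ((T s / d) * shannonEntropy (fun i => outProb (E s) (B₁ i) / T s)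
            + (T s / d) * shannonEntropy (fun j => outProb (E s) (B₂ j) / T s)) :=
          Finset.sum_le_sum fun s _ => pers s
      _ = _ := Finset.sum_add_distrib
  linarith
end
end

section
/- Suppose Alice prepares a qudit in a basis state of one of two mutually unbiased bases of ℂ^d, with arbitrary prior probability distributions {p_i^(1)} and {p_i^(2)} on the basis states, and Bob measures with an arbitrary POVM. Writing p_1^(m) = max_i p_i^(m) for the largest prior probability in the m-th basis, the mutual information satisfies (1/(d p_1^(1))) I_1 + (1/(d p_1^(2))) I_2 ≤ log₂ d. -/
open scoped BigOperators ComplexOrder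
open Matrix

noncomputable section

section SEG_A
open Finset

/-- pointwise Gibbs inequality -/
lemma gibbs_pt {a r : ℝ} (ha : 0 ≤ a) (hr : 0 ≤ r) (h0 : r = 0 → a = 0) :
    a - r ≤ a * (Real.log a - Real.log r) := by
  rcases eq_or_lt_of_le ha with h | h
  · simp only [← h, zero_mul, zero_sub, neg_nonpos]; exact hr
  · have hr' : 0 < r := by
      rcases eq_or_lt_of_le hr with h' | h'
      · exact absurd (h0 h'.symm) (ne_of_gt h)
      · exact h'
    have : Real.log (r / a) ≤ r / a - 1 := Real.log_le_sub_one_of_pos (by positivity)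
    have hlog : Real.log r - Real.log a ≤ r / a - 1 := by
      rwa [Real.log_div (ne_of_gt hr') (ne_of_gt h)] at this
    have := mul_le_mul_of_nonneg_left hlog (le_of_lt h)
    have h2 : a * (r / a - 1) = r - a := by field_simp
    nlinarith
lemma gibbs_sum {ι : Type*} [Fintype ι] (a r : ι → ℝ) (ha : ∀ i, 0 ≤ a i)
    (hr : ∀ i, 0 ≤ r i) (h0 : ∀ i, r i = 0 → a i = 0) (hsum : ∑ i, r i = ∑ i, a i) :
    0 ≤ ∑ i, a i * (Real.log (a i) - Real.log (r i)) := by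
  have : ∑ i, (a i - r i) ≤ ∑ i, a i * (Real.log (a i) - Real.log (r i)) :=
    Finset.sum_le_sum fun i _ => gibbs_pt (ha i) (hr i) (h0 i)
  have h2 : ∑ i, (a i - r i) = 0 := by rw [Finset.sum_sub_distrib, hsum, sub_self]
  linarith

end SEG_A

section SEG_B
open Matrix Finset

variable {d : ℕ}

/-- matrix whose columns are the basis vectors -/
def bmat (B : Fin d → Fin d → ℂ) : Matrix (Fin d) (Fin d) ℂ := Matrix.of fun k i => B i k

lemma dot_flip (x y : Fin d → ℂ) : star x ⬝ᵥ y = starRingEnd ℂ (star y ⬝ᵥ x) := by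
  simp only [dotProduct, map_sum, Pi.star_apply, _root_.map_mul, RingHom.coe_coe]
  refine Finset.sum_congr rfl fun k _ => ?_
  simp [Complex.conj_conj, mul_comm]

lemma norm_dot_flip (x y : Fin d → ℂ) : ‖star x ⬝ᵥ y‖ = ‖star y ⬝ᵥ x‖ := by
  rw [dot_flip]; exact RCLike.norm_conj _

lemma bmat_conjT_mul {B : Fin d → Fin d → ℂ} (hB : IsONB B) : (bmat B)ᴴ * bmat B = 1 := by
  ext i j
  have := hB i j
  simp only [dotProduct, Pi.star_apply] at this
  simp only [Matrix.mul_apply, conjTranspose_apply, bmat, Matrix.of_apply, Matrix.one_apply]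
  rw [← this]

lemma bmat_mul_conjT {B : Fin d → Fin d → ℂ} (hB : IsONB B) : bmat B * (bmat B)ᴴ = 1 :=
  mul_eq_one_comm.mp (bmat_conjT_mul hB)

lemma conjT_mulVec (B : Fin d → Fin d → ℂ) (x : Fin d → ℂ) (i : Fin d) :
    ((bmat B)ᴴ *ᵥ x) i = star (B i) ⬝ᵥ x := by
  simp only [mulVec, dotProduct, conjTranspose_apply, bmat, Matrix.of_apply, Pi.star_apply]

lemma sum_norm_sq_eq (y : Fin d → ℂ) : ∑ j, ‖y j‖ ^ 2 = (star y ⬝ᵥ y).re := by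
  simp only [dotProduct, Pi.star_apply, Complex.re_sum]
  refine Finset.sum_congr rfl fun k _ => ?_
  have h : (star (y k) * y k).re = (y k).re ^ 2 + (y k).im ^ 2 := by
    simp [Complex.mul_re, Complex.star_def]; ring
  rw [h,
    Complex.sq_norm, Complex.normSq_apply]
  ring

lemma isometry_sum_sq {N : Matrix (Fin d) (Fin d) ℂ} (hN : Nᴴ * N = 1) (x : Fin d → ℂ) :
    ∑ j, ‖(N *ᵥ x) j‖ ^ 2 = ∑ i, ‖x i‖ ^ 2 := by
  rw [sum_norm_sq_eq, sum_norm_sq_eq]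
  rw [star_mulVec, dotProduct_mulVec, Matrix.vecMul_vecMul, hN, Matrix.vecMul_one]

lemma parseval {B : Fin d → Fin d → ℂ} (hB : IsONB B) (x : Fin d → ℂ) :
    ∑ i, ‖star (B i) ⬝ᵥ x‖ ^ 2 = ∑ k, ‖x k‖ ^ 2 := by
  have h := isometry_sum_sq (N := (bmat B)ᴴ)
    (by rw [conjTranspose_conjTranspose]; exact bmat_mul_conjT hB) x
  simpa only [conjT_mulVec] using h

lemma sum_outProb_trace {B : Fin d → Fin d → ℂ} (hB : IsONB B)
    (M : Matrix (Fin d) (Fin d) ℂ) :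
    ∑ i, outProb M (B i) = M.trace.re := by
  have key : ∑ i, star (B i) ⬝ᵥ (M *ᵥ B i) = M.trace := by
    have h1 : ∀ i, star (B i) ⬝ᵥ (M *ᵥ B i) = ((bmat B)ᴴ * M * bmat B) i i := by
      intro i
      simp only [Matrix.mul_apply, conjTranspose_apply, bmat, Matrix.of_apply,
        dotProduct, mulVec, Pi.star_apply, Finset.sum_mul, Finset.mul_sum]
      rw [Finset.sum_comm]
      exact Finset.sum_congr rfl fun k _ => Finset.sum_congr rfl fun l _ => by ring
    calc ∑ i, star (B i) ⬝ᵥ (M *ᵥ B i) = ∑ i, ((bmat B)ᴴ * M * bmat B) i i := by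
          exact Finset.sum_congr rfl fun i _ => h1 i
      _ = ((bmat B)ᴴ * M * bmat B).trace := rfl
      _ = M.trace := by
          rw [Matrix.trace_mul_cycle, bmat_mul_conjT hB, Matrix.one_mul]
  simp only [outProb, ← Complex.re_sum, key]

end SEG_B

section SEG_C
open Matrix Finset Complex

/-- Building block for the three-lines function. -/
def pfun (c : ℝ) (w : ℂ) (z : ℂ) : ℂ :=
  if w = 0 then 0
  else Complex.exp (((c/2 : ℝ) : ℂ) * (1+z) * ((Real.log ‖w‖ : ℝ) : ℂ)) * (w / (‖w‖ : ℂ))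

lemma pfun_diff (c : ℝ) (w : ℂ) : Differentiable ℂ (pfun c w) := by
  unfold pfun
  by_cases hw : w = 0
  · simp [hw]
  · simp only [if_neg hw]
    apply Differentiable.mul_const
    apply Complex.differentiable_exp.comp
    apply Differentiable.mul_const
    exact (differentiable_const _).mul ((differentiable_const _).add differentiable_id)

lemma pfun_norm (c : ℝ) (w : ℂ) (z : ℂ) :
    ‖pfun c w z‖ = if w = 0 then 0 else ‖w‖ ^ (c * (1 + z.re) / 2) := by
  unfold pfun
  by_cases hw : w = 0
  · simp [hw]
  · have hw' : (0:ℝ) < ‖w‖ := norm_pos_iff.mpr hw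
    simp only [if_neg hw, norm_mul]
    have h1 : ‖w / (‖w‖ : ℂ)‖ = 1 := by
      rw [norm_div, Complex.norm_real, Real.norm_eq_abs, abs_of_pos hw', div_self (ne_of_gt hw')]
    rw [h1, mul_one, Complex.norm_exp]
    have h2 : ((((c/2 : ℝ) : ℂ)) * (1+z) * ((Real.log ‖w‖ : ℝ) : ℂ)).re
        = Real.log ‖w‖ * (c * (1 + z.re) / 2) := by
      simp only [Complex.mul_re, Complex.ofReal_re, Complex.ofReal_im, Complex.add_re,
        Complex.add_im, Complex.one_re, Complex.one_im, Complex.mul_im]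
      ring
    rw [h2, Real.rpow_def_of_pos hw']

lemma pfun_real (c θ : ℝ) (w : ℂ) :
    pfun c w (θ : ℂ) = ((‖w‖ ^ (c * (1+θ)/2 - 1) : ℝ) : ℂ) * w := by
  unfold pfun
  by_cases hw : w = 0
  · simp [hw]
  · have hw' : (0:ℝ) < ‖w‖ := norm_pos_iff.mpr hw
    rw [if_neg hw]
    have h2 : (((c/2 : ℝ) : ℂ)) * (1+(θ:ℂ)) * ((Real.log ‖w‖ : ℝ) : ℂ)
        = (((Real.log ‖w‖ * (c * (1+θ)/2) : ℝ)) : ℂ) := by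
      push_cast; ring
    rw [h2, ← Complex.ofReal_exp, ← Real.rpow_def_of_pos hw']
    rw [Real.rpow_sub hw', Real.rpow_one]
    push_cast
    field_simp

end SEG_C

section SEG_D
open Matrix Finset Complex

lemma rpow_sq' (x e : ℝ) (hx : 0 ≤ x) : (x ^ e)^2 = x ^ (e*2) := by
  rw [← Real.rpow_natCast (x ^ e) 2, ← Real.rpow_mul hx]
  norm_num

lemma pnorm_bound (c : ℝ) (hc : 0 < c) (w : ℂ) (z : ℂ) (hz : z.re ∈ Set.Icc (0:ℝ) 1) :
    ‖pfun c w z‖ ≤ max (‖w‖ ^ (c/2)) (‖w‖ ^ c) := by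
  rw [pfun_norm]
  by_cases hw : w = 0
  · simp only [if_pos hw]
    exact le_max_of_le_left (Real.rpow_nonneg (norm_nonneg w) _)
  · simp only [if_neg hw]
    have hw' : (0:ℝ) < ‖w‖ := norm_pos_iff.mpr hw
    have he1 : c/2 ≤ c * (1 + z.re) / 2 := by nlinarith [hz.1]
    have he2 : c * (1 + z.re) / 2 ≤ c := by nlinarith [hz.2]
    rcases le_or_gt ‖w‖ 1 with h1 | h1
    · exact le_max_of_le_left (Real.rpow_le_rpow_of_exponent_ge hw' h1 he1)
    · exact le_max_of_le_right (Real.rpow_le_rpow_of_exponent_le h1.le he2)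

lemma rt_step {d : ℕ} (hd0 : 0 < (d:ℝ)) (T : Matrix (Fin d) (Fin d) ℂ)
    (hT : ∀ j i, ‖T j i‖ ^ 2 = 1 / d)
    (hiso : ∀ x : Fin d → ℂ, ∑ j, ‖(T *ᵥ x) j‖ ^ 2 = ∑ i, ‖x i‖ ^ 2)
    (a : Fin d → ℂ) (ha : ∑ i, ‖a i‖ ^ 2 = 1)
    (θ : ℝ) (hθ0 : 0 < θ) (hθ1 : θ < 1) :
    ((1-θ)/2) * Real.log (∑ j, ‖(T *ᵥ a) j‖ ^ ((2/(1-θ)) : ℝ)) + (θ/2) * Real.log d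
      ≤ ((1+θ)/2) * Real.log (∑ i, ‖a i‖ ^ ((2/(1+θ)) : ℝ)) := by
  have h1θ : (0:ℝ) < 1 - θ := by linarith
  have h1θ' : (0:ℝ) < 1 + θ := by linarith
  set b : Fin d → ℂ := T *ᵥ a with hbdef
  set pp : ℝ := 2/(1+θ) with hppdef
  set qq : ℝ := 2/(1-θ) with hqqdef
  have hpp0 : 0 < pp := by positivity
  have hqq0 : 0 < qq := by positivity
  have hb2 : ∑ j, ‖b j‖ ^ 2 = 1 := by rw [hbdef, hiso a, ha]
  set Y : ℝ := ∑ i, ‖a i‖ ^ pp with hYdef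
  set W : ℝ := ∑ j, ‖b j‖ ^ qq with hWdef
  -- positivity of Y and W
  have hexu : ∃ i, a i ≠ 0 := by
    by_contra h
    push_neg at h
    rw [Finset.sum_eq_zero (fun i _ => by rw [h i]; simp)] at ha
    norm_num at ha
  have hexv : ∃ j, b j ≠ 0 := by
    by_contra h
    push_neg at h
    rw [Finset.sum_eq_zero (fun j _ => by rw [h j]; simp)] at hb2
    norm_num at hb2
  have hY0 : 0 < Y := by
    obtain ⟨i, hi⟩ := hexu
    exact Finset.sum_pos' (fun i _ => Real.rpow_nonneg (norm_nonneg _) _)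
      ⟨i, Finset.mem_univ i, Real.rpow_pos_of_pos (norm_pos_iff.mpr hi) _⟩
  have hW0 : 0 < W := by
    obtain ⟨j, hj⟩ := hexv
    exact Finset.sum_pos' (fun j _ => Real.rpow_nonneg (norm_nonneg _) _)
      ⟨j, Finset.mem_univ j, Real.rpow_pos_of_pos (norm_pos_iff.mpr hj) _⟩
  -- the three-lines function
  set Φ : ℂ → ℂ := fun z => ∑ j, pfun qq (star (b j)) z * ∑ i, T j i * pfun pp (a i) z
    with hΦdef
  have hΦdiff : Differentiable ℂ Φ := by
    apply Differentiable.fun_sum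
    intro j _
    exact (pfun_diff _ _).mul
      (Differentiable.fun_sum fun i _ => (differentiable_const _).mul (pfun_diff _ _))
  -- entry norm of T
  have hTn : ∀ j i, ‖T j i‖ = Real.sqrt (1/d) := by
    intro j i
    rw [← hT j i, Real.sqrt_sq (norm_nonneg _)]
  -- generic bound on the strip
  set C : ℝ := ∑ j, (max (‖b j‖ ^ (qq/2)) (‖b j‖ ^ qq)) *
      ∑ i, Real.sqrt (1/d) * (max (‖a i‖ ^ (pp/2)) (‖a i‖ ^ pp)) with hCdef
  have hmaxnn : ∀ (x e f : ℝ), 0 ≤ x → 0 ≤ max (x ^ e) (x ^ f) := by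
    intro x e f hx
    exact le_max_of_le_left (Real.rpow_nonneg hx _)
  have hΦbdd : ∀ z : ℂ, z.re ∈ Set.Icc (0:ℝ) 1 → ‖Φ z‖ ≤ C := by
    intro z hz
    rw [hΦdef]
    refine (norm_sum_le _ _).trans ?_
    rw [hCdef]
    refine Finset.sum_le_sum fun j _ => ?_
    rw [norm_mul]
    have h1 : ‖pfun qq (star (b j)) z‖ ≤ max (‖b j‖ ^ (qq/2)) (‖b j‖ ^ qq) := by
      have := pnorm_bound qq hqq0 (star (b j)) z hz
      rwa [norm_star] at this
    have h2 : ‖∑ i, T j i * pfun pp (a i) z‖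
        ≤ ∑ i, Real.sqrt (1/d) * (max (‖a i‖ ^ (pp/2)) (‖a i‖ ^ pp)) := by
      refine (norm_sum_le _ _).trans (Finset.sum_le_sum fun i _ => ?_)
      rw [norm_mul, hTn j i]
      exact mul_le_mul_of_nonneg_left (pnorm_bound pp hpp0 (a i) z hz) (Real.sqrt_nonneg _)
    exact mul_le_mul h1 h2 (norm_nonneg _) (hmaxnn _ _ _ (norm_nonneg _))
  -- edge 0 bound
  have hedge0 : ∀ z : ℂ, z.re = 0 → ‖Φ z‖ ≤ Real.sqrt W * Real.sqrt Y := by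
    intro z hz
    set x : Fin d → ℂ := fun i => pfun pp (a i) z with hxdef
    have hstep : ‖Φ z‖ ≤ ∑ j, ‖pfun qq (star (b j)) z‖ * ‖(T *ᵥ x) j‖ := by
      rw [hΦdef]
      refine (norm_sum_le _ _).trans (Finset.sum_le_sum fun j _ => ?_)
      rw [norm_mul]
      apply le_of_eq
      congr 1
    have hcs : ∑ j, ‖pfun qq (star (b j)) z‖ * ‖(T *ᵥ x) j‖
        ≤ Real.sqrt (∑ j, ‖pfun qq (star (b j)) z‖ ^ 2) * Real.sqrt (∑ j, ‖(T *ᵥ x) j‖ ^ 2) :=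
      Real.sum_mul_le_sqrt_mul_sqrt _ _ _
    have hW' : ∑ j, ‖pfun qq (star (b j)) z‖ ^ 2 = W := by
      rw [hWdef]
      refine Finset.sum_congr rfl fun j _ => ?_
      rw [pfun_norm, norm_star]
      simp only [star_eq_zero]
      by_cases hbj : b j = 0
      · simp [hbj, Real.zero_rpow (ne_of_gt hqq0)]
      · simp only [if_neg hbj]
        rw [hz]
        rw [rpow_sq' _ _ (norm_nonneg _)]
        congr 1
        ring
    have hY' : ∑ j, ‖(T *ᵥ x) j‖ ^ 2 = Y := by
      rw [hiso x, hYdef]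
      refine Finset.sum_congr rfl fun i _ => ?_
      rw [hxdef]
      simp only
      rw [pfun_norm]
      by_cases hai : a i = 0
      · simp [hai, Real.zero_rpow (ne_of_gt hpp0)]
      · simp only [if_neg hai]
        rw [hz, rpow_sq' _ _ (norm_nonneg _)]
        congr 1
        ring
    calc ‖Φ z‖ ≤ _ := hstep
      _ ≤ _ := hcs
      _ = Real.sqrt W * Real.sqrt Y := by rw [hW', hY']
  -- edge 1 bound
  have hedge1 : ∀ z : ℂ, z.re = 1 → ‖Φ z‖ ≤ Real.sqrt (1/d) * W * Y := by
    intro z hz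
    rw [hΦdef]
    have hstep : ∀ j, ‖pfun qq (star (b j)) z * ∑ i, T j i * pfun pp (a i) z‖
        ≤ (‖b j‖ ^ qq) * (Real.sqrt (1/d) * Y) := by
      intro j
      rw [norm_mul]
      have h1 : ‖pfun qq (star (b j)) z‖ = ‖b j‖ ^ qq := by
        rw [pfun_norm, norm_star]
        simp only [star_eq_zero]
        by_cases hbj : b j = 0
        · simp [hbj, Real.zero_rpow (ne_of_gt hqq0)]
        · simp only [if_neg hbj, hz]
          congr 1
          ring
      have h2 : ‖∑ i, T j i * pfun pp (a i) z‖ ≤ Real.sqrt (1/d) * Y := by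
        refine (norm_sum_le _ _).trans ?_
        rw [hYdef, Finset.mul_sum]
        refine Finset.sum_le_sum fun i _ => ?_
        rw [norm_mul, hTn j i]
        refine mul_le_mul_of_nonneg_left (le_of_eq ?_) (Real.sqrt_nonneg _)
        rw [pfun_norm]
        by_cases hai : a i = 0
        · simp [hai, Real.zero_rpow (ne_of_gt hpp0)]
        · simp only [if_neg hai, hz]
          congr 1
          ring
      rw [h1]
      exact mul_le_mul_of_nonneg_left h2 (Real.rpow_nonneg (norm_nonneg _) _)
    refine (norm_sum_le _ _).trans ?_
    calc ∑ j, ‖pfun qq (star (b j)) z * ∑ i, T j i * pfun pp (a i) z‖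
        ≤ ∑ j, (‖b j‖ ^ qq) * (Real.sqrt (1/d) * Y) := Finset.sum_le_sum fun j _ => hstep j
      _ = Real.sqrt (1/d) * W * Y := by rw [← Finset.sum_mul, ← hWdef]; ring
  -- value at θ
  have hval : Φ ((θ:ℝ) : ℂ) = (W : ℂ) := by
    rw [hΦdef]
    simp only
    have hinner : ∀ j, (∑ i, T j i * pfun pp (a i) ((θ:ℝ):ℂ)) = b j := by
      intro j
      have : ∀ i, pfun pp (a i) ((θ:ℝ):ℂ) = a i := by
        intro i
        rw [pfun_real]
        have he : pp * (1+θ)/2 - 1 = 0 := by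
          rw [hppdef]; field_simp; ring
        rw [he, Real.rpow_zero]
        simp
      rw [show (∑ i, T j i * pfun pp (a i) ((θ:ℝ):ℂ)) = ∑ i, T j i * a i from
        Finset.sum_congr rfl fun i _ => by rw [this i]]
      rfl
    have houter : ∀ j, pfun qq (star (b j)) ((θ:ℝ):ℂ) * b j = ((‖b j‖ ^ qq : ℝ) : ℂ) := by
      intro j
      rw [pfun_real, norm_star]
      by_cases hbj : b j = 0
      · rw [hbj]
        simp only [norm_zero, mul_zero, star_zero]
        rw [Real.zero_rpow (ne_of_gt hqq0)]
        norm_num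
      · have hb' : (0:ℝ) < ‖b j‖ := norm_pos_iff.mpr hbj
        have hstar : star (b j) * b j = ((‖b j‖^2 : ℝ) : ℂ) := by
          have hns : Complex.normSq (b j) = ‖b j‖^2 := by
            rw [Complex.normSq_eq_norm_sq]
          rw [show star (b j) * b j = b j * (starRingEnd ℂ) (b j) from mul_comm _ _,
            Complex.mul_conj, hns]
        have : ((‖b j‖ ^ (qq * (1+θ)/2 - 1) : ℝ) : ℂ) * star (b j) * b j
            = ((‖b j‖ ^ (qq * (1+θ)/2 - 1) : ℝ) : ℂ) * ((‖b j‖^2 : ℝ) : ℂ) := by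
          rw [mul_assoc, hstar]
        rw [mul_assoc, hstar, ← Complex.ofReal_mul]
        congr 1
        rw [show (‖b j‖^2 : ℝ) = ‖b j‖ ^ (2:ℝ) from (Real.rpow_natCast _ 2).symm]
        rw [← Real.rpow_add hb']
        congr 1
        rw [hqqdef]
        field_simp
        ring
    calc (∑ j, pfun qq (star (b j)) ((θ:ℝ):ℂ) * ∑ i, T j i * pfun pp (a i) ((θ:ℝ):ℂ))
        = ∑ j, ((‖b j‖ ^ qq : ℝ) : ℂ) := by
          refine Finset.sum_congr rfl fun j _ => ?_
          rw [hinner j, houter j]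
      _ = (W : ℂ) := by rw [hWdef]; push_cast; rfl
  -- apply three-lines theorem
  have hmem : ((θ:ℝ):ℂ) ∈ Complex.HadamardThreeLines.verticalClosedStrip 0 1 := by
    simp only [Complex.HadamardThreeLines.verticalClosedStrip, Set.mem_preimage,
      Complex.ofReal_re, Set.mem_Icc]
    exact ⟨hθ0.le, hθ1.le⟩
  have hBdd : BddAbove ((norm ∘ Φ) '' Complex.HadamardThreeLines.verticalClosedStrip 0 1) := by
    refine ⟨C, ?_⟩
    rintro _ ⟨z, hz, rfl⟩
    exact hΦbdd z hz
  have key := Complex.HadamardThreeLines.norm_le_interp_of_mem_verticalClosedStrip' (f := Φ)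
    zero_lt_one hmem (hΦdiff.diffContOnCl) hBdd
    (fun z hz => hedge0 z hz) (fun z hz => hedge1 z hz)
  simp only [sub_zero, div_one] at key
  rw [hval] at key
  rw [Complex.norm_real, Real.norm_eq_abs, abs_of_pos hW0, Complex.ofReal_re] at key
  -- take logarithms
  have hC0 : (0:ℝ) < Real.sqrt W * Real.sqrt Y := by positivity
  have hC1 : (0:ℝ) < Real.sqrt (1/d) * W * Y := by positivity
  have hlog := Real.log_le_log hW0 key
  rw [Real.log_mul (ne_of_gt (Real.rpow_pos_of_pos hC0 _)) (ne_of_gt (Real.rpow_pos_of_pos hC1 _)),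
    Real.log_rpow hC0, Real.log_rpow hC1] at hlog
  have e0 : Real.log (Real.sqrt W * Real.sqrt Y) = Real.log W / 2 + Real.log Y / 2 := by
    rw [Real.log_mul (ne_of_gt (Real.sqrt_pos.mpr hW0)) (ne_of_gt (Real.sqrt_pos.mpr hY0)),
      Real.log_sqrt hW0.le, Real.log_sqrt hY0.le]
  have e1 : Real.log (Real.sqrt (1/d) * W * Y)
      = -(Real.log d) / 2 + Real.log W + Real.log Y := by
    rw [Real.log_mul (by positivity) (ne_of_gt hY0), Real.log_mul (by positivity) (ne_of_gt hW0),
      Real.log_sqrt (by positivity), one_div, Real.log_inv]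
    try ring
  rw [e0, e1] at hlog
  -- conclude
  have hWgoal : Real.log (∑ j, ‖(T *ᵥ a) j‖ ^ ((2/(1-θ)) : ℝ)) = Real.log W := rfl
  have hYgoal : Real.log (∑ i, ‖a i‖ ^ ((2/(1+θ)) : ℝ)) = Real.log Y := rfl
  rw [hWgoal, hYgoal]
  nlinarith [hlog]

end SEG_D

section SEG_E
open Finset Filter Set

lemma deriv_step {d : ℕ} (u : Fin d → ℝ) (hu : ∀ i, 0 ≤ u i) (husum : ∑ i, u i = 1) :
    HasDerivAt (fun θ : ℝ => ((1+θ)/2) * Real.log (∑ i, u i ^ ((1/(1+θ)) : ℝ)))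
      (-(1/2) * ∑ i, u i * Real.log (u i)) 0 := by
  classical
  set J := Finset.univ.filter (fun i : Fin d => u i ≠ 0) with hJ
  set g : ℝ → ℝ := fun θ => ∑ i ∈ J, Real.exp ((1+θ)⁻¹ * Real.log (u i)) with hg
  have hcongr : ∀ θ : ℝ, -1 < θ → (∑ i, u i ^ ((1/(1+θ)) : ℝ)) = g θ := by
    intro θ hθ
    have hθ1 : (0:ℝ) < 1 + θ := by linarith
    rw [hg]
    rw [← Finset.sum_subset (Finset.subset_univ J) (fun i _ hiJ => ?_)]
    · refine Finset.sum_congr rfl fun i hi => ?_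
      have hui : u i ≠ 0 := (Finset.mem_filter.mp hi).2
      have hui' : 0 < u i := lt_of_le_of_ne (hu i) (Ne.symm hui)
      rw [Real.rpow_def_of_pos hui', one_div]
      ring_nf
    · have hui : u i = 0 := by
        by_contra h
        exact hiJ (Finset.mem_filter.mpr ⟨Finset.mem_univ i, h⟩)
      rw [hui, Real.zero_rpow (by positivity)]
  have hg0 : g 0 = 1 := by
    rw [← husum, ← hcongr 0 (by norm_num)]
    norm_num
  have hgd : HasDerivAt g (∑ i ∈ J, -(u i * Real.log (u i))) 0 := by
    apply HasDerivAt.fun_sum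
    intro i hi
    have hui' : 0 < u i := lt_of_le_of_ne (hu i) (Ne.symm (Finset.mem_filter.mp hi).2)
    have h1 : HasDerivAt (fun θ : ℝ => 1 + θ) 1 0 := by
      simpa using (hasDerivAt_id (0:ℝ)).const_add 1
    have h2 : HasDerivAt (fun θ : ℝ => (1+θ)⁻¹) (-1) 0 := by
      have := h1.inv (by norm_num)
      exact this.congr_deriv (by norm_num)
    have h3 : HasDerivAt (fun θ : ℝ => (1+θ)⁻¹ * Real.log (u i)) (-Real.log (u i)) 0 := by
      simpa using h2.mul_const (Real.log (u i))
    have h4 := h3.exp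
    simp only [add_zero, inv_one, one_mul] at h4
    refine h4.congr_deriv ?_
    rw [Real.exp_log hui']
    ring
  have hlogd : HasDerivAt (fun θ => Real.log (g θ)) (∑ i ∈ J, -(u i * Real.log (u i))) 0 := by
    have := hgd.log (by rw [hg0]; norm_num)
    simpa [hg0] using this
  have hlin : HasDerivAt (fun θ : ℝ => (1+θ)/2) (1/2) 0 := by
    have : HasDerivAt (fun θ : ℝ => 1 + θ) 1 0 := by
      simpa using (hasDerivAt_id (0:ℝ)).const_add 1
    simpa using this.div_const 2
  have hmul := hlin.mul hlogd
  have hsum : ∑ i ∈ J, -(u i * Real.log (u i)) = -∑ i, u i * Real.log (u i) := by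
    rw [← Finset.sum_neg_distrib]
    rw [Finset.sum_subset (Finset.subset_univ J) (fun i _ hiJ => ?_)]
    · have hui : u i = 0 := by
        by_contra h
        exact hiJ (Finset.mem_filter.mpr ⟨Finset.mem_univ i, h⟩)
      rw [hui]
      simp
  have heq : (fun θ : ℝ => ((1+θ)/2) * Real.log (∑ i, u i ^ ((1/(1+θ)) : ℝ)))
      =ᶠ[nhds (0:ℝ)] (fun θ => ((1+θ)/2) * Real.log (g θ)) := by
    filter_upwards [Ioo_mem_nhds (show (-1:ℝ) < 0 by norm_num) (show (0:ℝ) < 1 by norm_num)]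
      with θ hθ
    rw [hcongr θ hθ.1]
  refine HasDerivAt.congr_of_eventuallyEq ?_ heq
  refine hmul.congr_deriv ?_
  rw [hsum]
  have : Real.log (g 0) = 0 := by rw [hg0, Real.log_one]
  rw [this]
  ring

end SEG_E

section SEG_F
open Matrix Finset Filter Set
open scoped Topology

lemma core_eur {d : ℕ} (hd0 : 0 < (d:ℝ)) (T : Matrix (Fin d) (Fin d) ℂ)
    (hT : ∀ j i, ‖T j i‖ ^ 2 = 1 / d)
    (hiso : ∀ x : Fin d → ℂ, ∑ j, ‖(T *ᵥ x) j‖ ^ 2 = ∑ i, ‖x i‖ ^ 2)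
    (a : Fin d → ℂ) (ha : ∑ i, ‖a i‖ ^ 2 = 1) :
    Real.log d ≤ (-∑ i, ‖a i‖^2 * Real.log (‖a i‖^2))
      + (-∑ j, ‖(T *ᵥ a) j‖^2 * Real.log (‖(T *ᵥ a) j‖^2)) := by
  set u : Fin d → ℝ := fun i => ‖a i‖^2 with hu
  set v : Fin d → ℝ := fun j => ‖(T *ᵥ a) j‖^2 with hv
  have husum : ∑ i, u i = 1 := ha
  have hvsum : ∑ j, v j = 1 := by rw [hv]; rw [hiso a]; exact ha
  have hun : ∀ i, 0 ≤ u i := fun i => by positivity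
  have hvn : ∀ j, 0 ≤ v j := fun j => by positivity
  set F : ℝ → ℝ := fun θ => ((1+θ)/2) * Real.log (∑ i, u i ^ ((1/(1+θ)) : ℝ)) with hF
  set Fv : ℝ → ℝ := fun θ => ((1+θ)/2) * Real.log (∑ j, v j ^ ((1/(1+θ)) : ℝ)) with hFv
  set K : ℝ → ℝ := fun θ => F θ - Fv (-θ) - (θ/2) * Real.log d with hK
  -- pow to rpow conversion
  have hconv : ∀ (x : ℝ), 0 ≤ x → ∀ (c : ℝ), (x^2 : ℝ) ^ (c : ℝ) = x ^ (2*c : ℝ) := by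
    intro x hx c
    rw [show (x^2 : ℝ) = x ^ ((2:ℕ) : ℝ) from (Real.rpow_natCast x 2).symm,
      ← Real.rpow_mul hx]
    norm_num
  have hK0 : K 0 = 0 := by
    have h1 : F 0 = 0 := by
      rw [hF]
      have he : (∑ i, u i ^ ((1/(1+(0:ℝ))) : ℝ)) = 1 := by
        rw [show ((1/(1+(0:ℝ))) : ℝ) = 1 by norm_num]
        simp only [Real.rpow_one]
        exact husum
      simp only [he, Real.log_one, mul_zero]
    have h2 : Fv (-0) = 0 := by
      rw [hFv, neg_zero]
      have he : (∑ j, v j ^ ((1/(1+(0:ℝ))) : ℝ)) = 1 := by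
        rw [show ((1/(1+(0:ℝ))) : ℝ) = 1 by norm_num]
        simp only [Real.rpow_one]
        exact hvsum
      simp only [he, Real.log_one, mul_zero]
    rw [hK]
    simp only [h1, h2]
    ring
  have hKpos : ∀ θ ∈ Ioo (0:ℝ) 1, 0 ≤ K θ := by
    intro θ hθ
    have h1θ : (0:ℝ) < 1 - θ := by linarith [hθ.2]
    have h1θ' : (0:ℝ) < 1 + θ := by linarith [hθ.1]
    have key := rt_step hd0 T hT hiso a ha θ hθ.1 hθ.2
    have e1 : (∑ i, u i ^ ((1/(1+θ)) : ℝ)) = ∑ i, ‖a i‖ ^ ((2/(1+θ)) : ℝ) := by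
      refine Finset.sum_congr rfl fun i _ => ?_
      rw [hu]
      simp only
      rw [hconv _ (norm_nonneg _)]
      congr 1
      field_simp
    have e2 : (∑ j, v j ^ ((1/(1-θ)) : ℝ)) = ∑ j, ‖(T *ᵥ a) j‖ ^ ((2/(1-θ)) : ℝ) := by
      refine Finset.sum_congr rfl fun j _ => ?_
      rw [hv]
      simp only
      rw [hconv _ (norm_nonneg _)]
      congr 1
      field_simp
    have eF : F θ = ((1+θ)/2) * Real.log (∑ i, ‖a i‖ ^ ((2/(1+θ)) : ℝ)) := by
      rw [hF]; simp only; rw [e1]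
    have eFv : Fv (-θ) = ((1-θ)/2) * Real.log (∑ j, ‖(T *ᵥ a) j‖ ^ ((2/(1-θ)) : ℝ)) := by
      rw [hFv]
      simp only
      rw [show (1 + -θ) = 1 - θ by ring, show (1/(1-θ) : ℝ) = 1/(1-θ) from rfl, e2]
    rw [hK]
    simp only
    rw [eF, eFv]
    linarith [key]
  -- derivative of K at 0
  have hd1 : HasDerivAt F (-(1/2) * ∑ i, u i * Real.log (u i)) 0 := deriv_step u hun husum
  have hd2 : HasDerivAt Fv (-(1/2) * ∑ j, v j * Real.log (v j)) 0 := deriv_step v hvn hvsum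
  have hneg : HasDerivAt (fun θ : ℝ => -θ) (-1) 0 := by
    exact (hasDerivAt_id (0:ℝ)).neg
  have hd2' : HasDerivAt (fun θ : ℝ => Fv (-θ)) ((1/2) * ∑ j, v j * Real.log (v j)) 0 := by
    have := HasDerivAt.comp (0:ℝ) (by simpa using hd2) hneg
    refine this.congr_deriv ?_
    ring
  have hlin : HasDerivAt (fun θ : ℝ => (θ/2) * Real.log d) (Real.log d / 2) 0 := by
    have h := ((hasDerivAt_id (0:ℝ)).div_const 2).mul_const (Real.log d)
    refine h.congr_deriv ?_
    ring
  have hKd : HasDerivAt K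
      (-(1/2) * ∑ i, u i * Real.log (u i) - (1/2) * ∑ j, v j * Real.log (v j)
        - Real.log d / 2) 0 := (hd1.sub hd2').sub hlin
  -- nonnegativity of the derivative
  have hslope := hasDerivAt_iff_tendsto_slope.mp hKd
  have h2 : Tendsto (slope K 0) (𝓝[>] (0:ℝ))
      (𝓝 (-(1/2) * ∑ i, u i * Real.log (u i) - (1/2) * ∑ j, v j * Real.log (v j)
        - Real.log d / 2)) :=
    hslope.mono_left (nhdsWithin_mono 0 (fun x hx => ne_of_gt hx))
  have h3 : ∀ᶠ θ in 𝓝[>] (0:ℝ), 0 ≤ slope K 0 θ := by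
    filter_upwards [Ioo_mem_nhdsGT_of_mem (show (0:ℝ) ∈ Ico (0:ℝ) 1 by constructor <;> norm_num)]
      with θ hθ
    rw [slope_def_field, hK0]
    apply div_nonneg
    · simpa using hKpos θ hθ
    · simpa using hθ.1.le
  have hD : 0 ≤ -(1/2) * ∑ i, u i * Real.log (u i) - (1/2) * ∑ j, v j * Real.log (v j)
      - Real.log d / 2 := ge_of_tendsto h2 h3
  have : Real.log d ≤ -∑ i, u i * Real.log (u i) - ∑ j, v j * Real.log (v j) := by linarith
  calc Real.log d ≤ -∑ i, u i * Real.log (u i) - ∑ j, v j * Real.log (v j) := this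
    _ = (-∑ i, ‖a i‖^2 * Real.log (‖a i‖^2)) + (-∑ j, ‖(T *ᵥ a) j‖^2 * Real.log (‖(T *ᵥ a) j‖^2))
      := by rw [hu, hv]; ring

end SEG_F

section SEG_G
open Matrix Finset

variable {d : ℕ}

lemma eur_pure (hd0 : 0 < (d:ℝ)) {B₁ B₂ : Fin d → Fin d → ℂ}
    (hB₁ : IsONB B₁) (hB₂ : IsONB B₂) (hMUB : AreMUB B₁ B₂)
    (ψ : Fin d → ℂ) (hψ : ∑ i, ‖star (B₁ i) ⬝ᵥ ψ‖^2 = 1) :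
    Real.log d ≤ (-∑ i, ‖star (B₁ i) ⬝ᵥ ψ‖^2 * Real.log (‖star (B₁ i) ⬝ᵥ ψ‖^2))
      + (-∑ j, ‖star (B₂ j) ⬝ᵥ ψ‖^2 * Real.log (‖star (B₂ j) ⬝ᵥ ψ‖^2)) := by
  set T : Matrix (Fin d) (Fin d) ℂ := (bmat B₂)ᴴ * bmat B₁ with hTdef
  have hTT : Tᴴ * T = 1 := by
    rw [hTdef, conjTranspose_mul, conjTranspose_conjTranspose]
    calc (bmat B₁)ᴴ * bmat B₂ * ((bmat B₂)ᴴ * bmat B₁)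
        = (bmat B₁)ᴴ * (bmat B₂ * (bmat B₂)ᴴ) * bmat B₁ := by
          rw [Matrix.mul_assoc, Matrix.mul_assoc, Matrix.mul_assoc]
      _ = 1 := by rw [bmat_mul_conjT hB₂, Matrix.mul_one, bmat_conjT_mul hB₁]
  have hiso := fun x => isometry_sum_sq hTT x
  have hTent : ∀ j i, ‖T j i‖ ^ 2 = 1 / d := by
    intro j i
    have h1 : T j i = star (B₂ j) ⬝ᵥ B₁ i := by
      rw [hTdef]
      simp only [Matrix.mul_apply, conjTranspose_apply, bmat, Matrix.of_apply, dotProduct,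
        Pi.star_apply]
    rw [h1, norm_dot_flip]
    exact hMUB i j
  set a : Fin d → ℂ := fun i => star (B₁ i) ⬝ᵥ ψ with hadef
  have hTa : T *ᵥ a = fun j => star (B₂ j) ⬝ᵥ ψ := by
    have h1 : a = (bmat B₁)ᴴ *ᵥ ψ := by
      funext i
      rw [conjT_mulVec]
    rw [h1, Matrix.mulVec_mulVec, hTdef, Matrix.mul_assoc, bmat_mul_conjT hB₁, Matrix.mul_one]
    funext j
    rw [conjT_mulVec]
  have := core_eur hd0 T hTent hiso a hψ
  rw [hTa] at this
  exact this

lemma eur_mixed (hd0 : 0 < (d:ℝ)) {B₁ B₂ : Fin d → Fin d → ℂ}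
    (hB₁ : IsONB B₁) (hB₂ : IsONB B₂) (hMUB : AreMUB B₁ B₂)
    (M : Matrix (Fin d) (Fin d) ℂ) (hM : M.PosSemidef)
    (t : ℝ) (ht : t = ∑ i, outProb M (B₁ i)) (ht0 : 0 < t) :
    Real.log d ≤ (-∑ i, (outProb M (B₁ i)/t) * Real.log (outProb M (B₁ i)/t))
      + (-∑ j, (outProb M (B₂ j)/t) * Real.log (outProb M (B₂ j)/t)) := by
  have hd1 : (1:ℝ) ≤ (d:ℝ) := by
    have : (1:ℕ) ≤ d := by exact_mod_cast Nat.one_le_iff_ne_zero.mpr (by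
      rintro rfl
      simp at hd0)
    exact_mod_cast this
  obtain ⟨A, hA⟩ : ∃ A : Matrix (Fin d) (Fin d) ℂ, M = Aᴴ * A := by
    open scoped MatrixOrder in
    exact CStarAlgebra.nonneg_iff_eq_star_mul_self.mp hM.nonneg
  -- the rows of A as vectors
  set w : Fin d → Fin d → ℂ := fun k l => star (A k l) with hwdef
  have houtP : ∀ x : Fin d → ℂ, outProb M x = ∑ k, ‖star (w k) ⬝ᵥ x‖^2 := by
    intro x
    have h1 : ∀ k, star (w k) ⬝ᵥ x = (A *ᵥ x) k := by
      intro k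
      simp only [hwdef, dotProduct, mulVec, Pi.star_apply, star_star]
    rw [show (∑ k, ‖star (w k) ⬝ᵥ x‖^2) = ∑ k, ‖(A *ᵥ x) k‖^2 from
      Finset.sum_congr rfl fun k _ => by rw [h1 k]]
    rw [sum_norm_sq_eq, outProb, hA]
    congr 1
    rw [star_mulVec, dotProduct_mulVec, dotProduct_mulVec, Matrix.vecMul_vecMul]
  -- weights
  set μ : Fin d → ℝ := fun k => ∑ i, ‖star (B₁ i) ⬝ᵥ w k‖^2 with hμdef
  have hμn : ∀ k, 0 ≤ μ k := fun k => Finset.sum_nonneg fun i _ => by positivity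
  have hμ2 : ∀ k, μ k = ∑ j, ‖star (B₂ j) ⬝ᵥ w k‖^2 := by
    intro k
    rw [hμdef]
    simp only
    rw [parseval hB₁, parseval hB₂]
  have hflip : ∀ (x : Fin d → ℂ) k, ‖star (w k) ⬝ᵥ x‖ = ‖star x ⬝ᵥ w k‖ := fun x k =>
    norm_dot_flip _ _
  have hout1 : ∀ i, outProb M (B₁ i) = ∑ k, ‖star (B₁ i) ⬝ᵥ w k‖^2 := by
    intro i
    rw [houtP]
    exact Finset.sum_congr rfl fun k _ => by rw [hflip]
  have hout2 : ∀ j, outProb M (B₂ j) = ∑ k, ‖star (B₂ j) ⬝ᵥ w k‖^2 := by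
    intro j
    rw [houtP]
    exact Finset.sum_congr rfl fun k _ => by rw [hflip]
  have htμ : t = ∑ k, μ k := by
    rw [ht]
    rw [show (∑ i, outProb M (B₁ i)) = ∑ i, ∑ k, ‖star (B₁ i) ⬝ᵥ w k‖^2 from
      Finset.sum_congr rfl fun i _ => hout1 i]
    rw [Finset.sum_comm]
  -- conditional distributions
  set uk : Fin d → Fin d → ℝ := fun k i =>
    if μ k = 0 then 1/(d:ℝ) else ‖star (B₁ i) ⬝ᵥ w k‖^2 / μ k with hukdef
  set vk : Fin d → Fin d → ℝ := fun k j =>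
    if μ k = 0 then 1/(d:ℝ) else ‖star (B₂ j) ⬝ᵥ w k‖^2 / μ k with hvkdef
  set lam : Fin d → ℝ := fun k => μ k / t with hlamdef
  have hlamn : ∀ k, 0 ≤ lam k := fun k => div_nonneg (hμn k) ht0.le
  have hlamsum : ∑ k, lam k = 1 := by
    rw [hlamdef]
    simp only
    rw [← Finset.sum_div, ← htμ, div_self (ne_of_gt ht0)]
  have hukn : ∀ k i, 0 ≤ uk k i := by
    intro k i
    rw [hukdef]
    simp only
    split
    · positivity
    · exact div_nonneg (by positivity) (hμn k)
  have hvkn : ∀ k j, 0 ≤ vk k j := by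
    intro k j
    rw [hvkdef]
    simp only
    split
    · positivity
    · exact div_nonneg (by positivity) (hμn k)
  have hmix1 : ∀ i, outProb M (B₁ i)/t = ∑ k, lam k * uk k i := by
    intro i
    rw [hout1 i, Finset.sum_div]
    refine Finset.sum_congr rfl fun k _ => ?_
    by_cases hk : μ k = 0
    · have hz : ‖star (B₁ i) ⬝ᵥ w k‖^2 = 0 := by
        have : ∑ i', ‖star (B₁ i') ⬝ᵥ w k‖^2 = 0 := hk
        have h' := (Finset.sum_eq_zero_iff_of_nonneg (fun i' _ => by positivity)).mp this
        exact h' i (Finset.mem_univ i)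
      rw [hz, hlamdef, hukdef]
      simp [hk]
    · rw [hlamdef, hukdef]
      simp only [if_neg hk]
      field_simp
  have hmix2 : ∀ j, outProb M (B₂ j)/t = ∑ k, lam k * vk k j := by
    intro j
    rw [hout2 j, Finset.sum_div]
    refine Finset.sum_congr rfl fun k _ => ?_
    by_cases hk : μ k = 0
    · have hz : ‖star (B₂ j) ⬝ᵥ w k‖^2 = 0 := by
        have h0 : ∑ j', ‖star (B₂ j') ⬝ᵥ w k‖^2 = 0 := by rw [← hμ2 k]; exact hk
        have h' := (Finset.sum_eq_zero_iff_of_nonneg (fun j' _ => by positivity)).mp h0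
        exact h' j (Finset.mem_univ j)
      rw [hz, hlamdef, hvkdef]
      simp [hk]
    · rw [hlamdef, hvkdef]
      simp only [if_neg hk]
      field_simp
  -- concavity of negMulLog
  have hconc : ∀ (p : Fin d → Fin d → ℝ), (∀ k i, 0 ≤ p k i) →
      ∀ i, ∑ k, lam k * Real.negMulLog (p k i) ≤ Real.negMulLog (∑ k, lam k * p k i) := by
    intro p hp i
    have := Real.concaveOn_negMulLog.le_map_sum (t := Finset.univ)
      (w := lam) (p := fun k => p k i) (fun k _ => hlamn k) hlamsum
      (fun k _ => Set.mem_Ici.mpr (hp k i))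
    simpa [smul_eq_mul] using this
  -- entropy of each pure piece
  have hpure : ∀ k, Real.log d ≤ (∑ i, Real.negMulLog (uk k i)) + ∑ j, Real.negMulLog (vk k j) := by
    intro k
    by_cases hk : μ k = 0
    · have hunif : ∀ c : Fin d, Real.negMulLog ((1:ℝ)/d) = Real.negMulLog (1/(d:ℝ)) := fun _ => rfl
      rw [hukdef, hvkdef]
      simp only [if_pos hk]
      rw [Finset.sum_const]
      simp only [Finset.card_univ, Fintype.card_fin, nsmul_eq_mul]
      have hlogd : Real.negMulLog (1/(d:ℝ)) = (1/d) * Real.log d := by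
        rw [Real.negMulLog, one_div, Real.log_inv]
        ring
      rw [hlogd]
      have hdne : (d:ℝ) ≠ 0 := ne_of_gt hd0
      have : (d:ℝ) * ((1/d) * Real.log d) = Real.log d := by field_simp
      rw [this]
      have : 0 ≤ Real.log d := Real.log_nonneg hd1
      linarith
    · have hμk : 0 < μ k := lt_of_le_of_ne (hμn k) (Ne.symm hk)
      set ψ : Fin d → ℂ := fun l => ((Real.sqrt (μ k))⁻¹ : ℝ) • w k l with hψdef
      have hdot : ∀ x : Fin d → ℂ, star x ⬝ᵥ ψ = (((Real.sqrt (μ k))⁻¹ : ℝ) : ℂ) * (star x ⬝ᵥ w k) := by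
        intro x
        rw [hψdef]
        simp only [dotProduct, Finset.mul_sum]
        refine Finset.sum_congr rfl fun l _ => ?_
        simp only [Pi.star_apply, Complex.real_smul]
        ring
      have hnrm : ∀ x : Fin d → ℂ, ‖star x ⬝ᵥ ψ‖^2 = ‖star x ⬝ᵥ w k‖^2 / μ k := by
        intro x
        rw [hdot x, norm_mul]
        rw [mul_pow]
        have h1 : ‖(((Real.sqrt (μ k))⁻¹ : ℝ) : ℂ)‖^2 = (μ k)⁻¹ := by
          rw [Complex.norm_real, Real.norm_eq_abs, abs_of_nonneg (by positivity), ← Real.sqrt_inv]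
          exact Real.sq_sqrt (by positivity)
        rw [h1]
        ring
      have hψ1 : ∑ i, ‖star (B₁ i) ⬝ᵥ ψ‖^2 = 1 := by
        rw [show (∑ i, ‖star (B₁ i) ⬝ᵥ ψ‖^2) = ∑ i, ‖star (B₁ i) ⬝ᵥ w k‖^2 / μ k from
          Finset.sum_congr rfl fun i _ => hnrm _]
        rw [← Finset.sum_div]
        have hμr : (∑ i, ‖star (B₁ i) ⬝ᵥ w k‖^2) = μ k := rfl
        rw [hμr, div_self hk]
      have := eur_pure hd0 hB₁ hB₂ hMUB ψ hψ1
      have e1 : ∀ i, ‖star (B₁ i) ⬝ᵥ ψ‖^2 = uk k i := by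
        intro i
        rw [hnrm, hukdef]
        simp only [if_neg hk]
      have e2 : ∀ j, ‖star (B₂ j) ⬝ᵥ ψ‖^2 = vk k j := by
        intro j
        rw [hnrm, hvkdef]
        simp only [if_neg hk]
      calc Real.log d ≤ _ := this
        _ = (∑ i, Real.negMulLog (uk k i)) + ∑ j, Real.negMulLog (vk k j) := by
            simp only [Real.negMulLog]
            rw [← Finset.sum_neg_distrib, ← Finset.sum_neg_distrib]
            congr 1
            · refine Finset.sum_congr rfl fun i _ => ?_
              rw [e1 i]
              ring
            · refine Finset.sum_congr rfl fun j _ => ?_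
              rw [e2 j]
              ring
  -- combine
  have hstep : Real.log d ≤ ∑ k, lam k * ((∑ i, Real.negMulLog (uk k i)) + ∑ j, Real.negMulLog (vk k j)) := by
    calc Real.log d = ∑ k, lam k * Real.log d := by rw [← Finset.sum_mul, hlamsum, one_mul]
      _ ≤ _ := Finset.sum_le_sum fun k _ => mul_le_mul_of_nonneg_left (hpure k) (hlamn k)
  have hfin1 : ∑ k, lam k * ∑ i, Real.negMulLog (uk k i)
      ≤ ∑ i, Real.negMulLog (outProb M (B₁ i)/t) := by
    rw [show (∑ k, lam k * ∑ i, Real.negMulLog (uk k i))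
        = ∑ i, ∑ k, lam k * Real.negMulLog (uk k i) by
      rw [Finset.sum_comm]
      exact Finset.sum_congr rfl fun k _ => Finset.mul_sum _ _ _]
    refine Finset.sum_le_sum fun i _ => ?_
    rw [hmix1 i]
    exact hconc uk hukn i
  have hfin2 : ∑ k, lam k * ∑ j, Real.negMulLog (vk k j)
      ≤ ∑ j, Real.negMulLog (outProb M (B₂ j)/t) := by
    rw [show (∑ k, lam k * ∑ j, Real.negMulLog (vk k j))
        = ∑ j, ∑ k, lam k * Real.negMulLog (vk k j) by
      rw [Finset.sum_comm]
      exact Finset.sum_congr rfl fun k _ => Finset.mul_sum _ _ _]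
    refine Finset.sum_le_sum fun j _ => ?_
    rw [hmix2 j]
    exact hconc vk hvkn j
  have hsplit : ∑ k, lam k * ((∑ i, Real.negMulLog (uk k i)) + ∑ j, Real.negMulLog (vk k j))
      = (∑ k, lam k * ∑ i, Real.negMulLog (uk k i)) + ∑ k, lam k * ∑ j, Real.negMulLog (vk k j) := by
    rw [← Finset.sum_add_distrib]
    exact Finset.sum_congr rfl fun k _ => by ring
  have hgoal1 : (-∑ i, (outProb M (B₁ i)/t) * Real.log (outProb M (B₁ i)/t))
      = ∑ i, Real.negMulLog (outProb M (B₁ i)/t) := by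
    rw [← Finset.sum_neg_distrib]
    exact Finset.sum_congr rfl fun i _ => by rw [Real.negMulLog]; ring
  have hgoal2 : (-∑ j, (outProb M (B₂ j)/t) * Real.log (outProb M (B₂ j)/t))
      = ∑ j, Real.negMulLog (outProb M (B₂ j)/t) := by
    rw [← Finset.sum_neg_distrib]
    exact Finset.sum_congr rfl fun j _ => by rw [Real.negMulLog]; ring
  rw [hgoal1, hgoal2]
  calc Real.log d ≤ _ := hstep
    _ = _ := hsplit
    _ ≤ _ := add_le_add hfin1 hfin2

end SEG_G

section SEG_H
open Finset

lemma info_bound {d : ℕ} {S : Type*} [Fintype S]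
    (a : S → Fin d → ℝ) (p : Fin d → ℝ) (r : S → ℝ) (q : ℝ)
    (ha : ∀ s i, 0 ≤ a s i) (hasum : ∀ i, ∑ s, a s i = 1)
    (hp : ∀ i, 0 ≤ p i) (hpsum : ∑ i, p i = 1) (hq : ∀ i, p i ≤ q) (hq0 : 0 ≤ q)
    (hr : ∀ s, 0 ≤ r s) (hrsum : ∑ s, r s = 1) (hr0 : ∀ s i, r s = 0 → a s i = 0) :
    (-∑ i, p i * Real.log (p i))
      - ∑ s, (∑ i, p i * a s i) * (-∑ i, (p i * a s i / ∑ j, p j * a s j)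
          * Real.log (p i * a s i / ∑ j, p j * a s j))
      ≤ q * ∑ s, ∑ i, a s i * (Real.log (a s i) - Real.log (r s)) := by
  classical
  set P : S → ℝ := fun s => ∑ j, p j * a s j with hPdef
  have hPn : ∀ s, 0 ≤ P s := fun s => Finset.sum_nonneg fun i _ =>
    mul_nonneg (hp i) (ha s i)
  have hPx : ∀ s i, P s = 0 → p i * a s i = 0 := by
    intro s i hP
    have := (Finset.sum_eq_zero_iff_of_nonneg (fun i _ => mul_nonneg (hp i) (ha s i))).mp hP
    exact this i (Finset.mem_univ i)
  have hPsum : ∑ s, P s = 1 := by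
    rw [hPdef]
    simp only
    rw [Finset.sum_comm]
    rw [show (∑ j, ∑ s, p j * a s j) = ∑ j, p j * ∑ s, a s j from
      Finset.sum_congr rfl fun j _ => by rw [Finset.mul_sum]]
    rw [show (∑ j, p j * ∑ s, a s j) = ∑ j, p j from
      Finset.sum_congr rfl fun j _ => by rw [hasum j, mul_one]]
    exact hpsum
  have stepA : ∀ s, (P s) * (-∑ i, (p i * a s i / P s) * Real.log (p i * a s i / P s))
      = ∑ i, (p i * a s i * Real.log (P s) - p i * a s i * Real.log (p i * a s i)) := by
    intro s
    by_cases hPs : P s = 0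
    · rw [hPs, zero_mul]
      symm
      refine Finset.sum_eq_zero fun i _ => ?_
      rw [hPx s i hPs]
      ring
    · have hPs' : 0 < P s := lt_of_le_of_ne (hPn s) (Ne.symm hPs)
      have key : ∀ i : Fin d, P s * ((p i * a s i / P s) * Real.log (p i * a s i / P s))
          = -(p i * a s i * Real.log (P s) - p i * a s i * Real.log (p i * a s i)) := by
        intro i
        by_cases hx : p i * a s i = 0
        · rw [hx]; simp
        · have hx' : 0 < p i * a s i :=
            lt_of_le_of_ne (mul_nonneg (hp i) (ha s i)) (Ne.symm hx)
          rw [Real.log_div (ne_of_gt hx') (ne_of_gt hPs')]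
          field_simp
          ring
      rw [mul_neg, Finset.mul_sum]
      rw [show (∑ i, P s * ((p i * a s i / P s) * Real.log (p i * a s i / P s)))
          = ∑ i, -(p i * a s i * Real.log (P s) - p i * a s i * Real.log (p i * a s i)) from
        Finset.sum_congr rfl fun i _ => key i]
      rw [Finset.sum_neg_distrib, neg_neg]
  have stepB : (-∑ i, p i * Real.log (p i)) = -∑ s, ∑ i, a s i * (p i * Real.log (p i)) := by
    congr 1
    rw [Finset.sum_comm]
    refine (Finset.sum_congr rfl fun i _ => ?_).symm
    rw [← Finset.sum_mul, hasum i, one_mul]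
  have stepC : ∀ s i,
      -(a s i * (p i * Real.log (p i)))
        - (p i * a s i * Real.log (P s) - p i * a s i * Real.log (p i * a s i))
      = p i * a s i * (Real.log (a s i) - Real.log (r s))
        - p i * a s i * (Real.log (P s) - Real.log (r s)) := by
    intro s i
    by_cases hpi : p i = 0
    · rw [hpi]; ring
    · by_cases hai : a s i = 0
      · rw [hai]; ring
      · have h1 : p i * a s i ≠ 0 := mul_ne_zero hpi hai
        rw [Real.log_mul hpi hai]
        ring
  have perS : ∀ s, (-∑ i, a s i * (p i * Real.log (p i)))
      - ∑ i, (p i * a s i * Real.log (P s) - p i * a s i * Real.log (p i * a s i))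
      = (∑ i, p i * a s i * (Real.log (a s i) - Real.log (r s)))
        - P s * (Real.log (P s) - Real.log (r s)) := by
    intro s
    calc (-∑ i, a s i * (p i * Real.log (p i)))
          - ∑ i, (p i * a s i * Real.log (P s) - p i * a s i * Real.log (p i * a s i))
        = ∑ i, (-(a s i * (p i * Real.log (p i)))
            - (p i * a s i * Real.log (P s) - p i * a s i * Real.log (p i * a s i))) := by
          symm
          rw [Finset.sum_sub_distrib, Finset.sum_neg_distrib]
      _ = ∑ i, (p i * a s i * (Real.log (a s i) - Real.log (r s))
            - p i * a s i * (Real.log (P s) - Real.log (r s))) :=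
          Finset.sum_congr rfl fun i _ => stepC s i
      _ = (∑ i, p i * a s i * (Real.log (a s i) - Real.log (r s)))
            - ∑ i, p i * a s i * (Real.log (P s) - Real.log (r s)) :=
          Finset.sum_sub_distrib _ _
      _ = (∑ i, p i * a s i * (Real.log (a s i) - Real.log (r s)))
            - P s * (Real.log (P s) - Real.log (r s)) := by
          congr 1
          rw [hPdef]
          simp only
          rw [Finset.sum_mul]
  have main : (-∑ i, p i * Real.log (p i)) - ∑ s, (P s) *
        (-∑ i, (p i * a s i / P s) * Real.log (p i * a s i / P s))
      = (∑ s, ∑ i, p i * a s i * (Real.log (a s i) - Real.log (r s)))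
        - ∑ s, P s * (Real.log (P s) - Real.log (r s)) := by
    rw [show (∑ s, (P s) * (-∑ i, (p i * a s i / P s) * Real.log (p i * a s i / P s)))
        = ∑ s, ∑ i, (p i * a s i * Real.log (P s) - p i * a s i * Real.log (p i * a s i)) from
      Finset.sum_congr rfl fun s _ => stepA s]
    rw [stepB]
    have hpull : (-∑ s, ∑ i, a s i * (p i * Real.log (p i)))
        - ∑ s, ∑ i, (p i * a s i * Real.log (P s) - p i * a s i * Real.log (p i * a s i))
        = ∑ s, ((-∑ i, a s i * (p i * Real.log (p i)))
          - ∑ i, (p i * a s i * Real.log (P s) - p i * a s i * Real.log (p i * a s i))) := by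
      symm
      rw [Finset.sum_sub_distrib, Finset.sum_neg_distrib]
    rw [hpull]
    rw [show (∑ s, ((-∑ i, a s i * (p i * Real.log (p i)))
          - ∑ i, (p i * a s i * Real.log (P s) - p i * a s i * Real.log (p i * a s i))))
        = ∑ s, ((∑ i, p i * a s i * (Real.log (a s i) - Real.log (r s)))
          - P s * (Real.log (P s) - Real.log (r s))) from
      Finset.sum_congr rfl fun s _ => perS s]
    rw [Finset.sum_sub_distrib]
  have hr0P : ∀ s, r s = 0 → P s = 0 := by
    intro s hs
    rw [hPdef]
    simp only
    exact Finset.sum_eq_zero fun j _ => by rw [hr0 s j hs, mul_zero]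
  have hGibbsS : 0 ≤ ∑ s, P s * (Real.log (P s) - Real.log (r s)) := by
    have h1 : ∑ s, (P s - r s) ≤ ∑ s, P s * (Real.log (P s) - Real.log (r s)) :=
      Finset.sum_le_sum fun s _ => gibbs_pt (hPn s) (hr s) (hr0P s)
    have h2 : ∑ s, (P s - r s) = 0 := by
      rw [Finset.sum_sub_distrib, hPsum, hrsum, sub_self]
    linarith
  have step2 : (∑ s, ∑ i, p i * a s i * (Real.log (a s i) - Real.log (r s)))
      ≤ q * ∑ s, ∑ i, a s i * (Real.log (a s i) - Real.log (r s)) := by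
    rw [Finset.sum_comm]
    rw [show (q * ∑ s, ∑ i, a s i * (Real.log (a s i) - Real.log (r s)))
        = q * ∑ i, ∑ s, a s i * (Real.log (a s i) - Real.log (r s)) from by rw [Finset.sum_comm]]
    rw [Finset.mul_sum]
    refine Finset.sum_le_sum fun i _ => ?_
    have hD : 0 ≤ ∑ s, a s i * (Real.log (a s i) - Real.log (r s)) :=
      gibbs_sum (fun s => a s i) r (fun s => ha s i) hr (fun s => hr0 s i)
        (by rw [hrsum, hasum i])
    calc ∑ s, p i * a s i * (Real.log (a s i) - Real.log (r s))
        = p i * ∑ s, a s i * (Real.log (a s i) - Real.log (r s)) := by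
          rw [Finset.mul_sum]
          exact Finset.sum_congr rfl fun s _ => by ring
      _ ≤ q * ∑ s, a s i * (Real.log (a s i) - Real.log (r s)) :=
          mul_le_mul_of_nonneg_right (hq i) hD
  linarith [main, hGibbsS, step2]

end SEG_H

section SEG_I
open Matrix Finset

lemma log2_shannon {ι : Type*} [Fintype ι] (q : ι → ℝ) :
    Real.log 2 * shannonEntropy q = -∑ i, q i * Real.log (q i) := by
  have l2 : Real.log 2 ≠ 0 := ne_of_gt (Real.log_pos (by norm_num))
  rw [shannonEntropy, mul_neg, neg_inj, Finset.mul_sum]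
  refine Finset.sum_congr rfl fun i _ => ?_
  rw [Real.logb]
  field_simp

lemma mutInfo_log2 {d : ℕ} {S : Type*} [Fintype S] (B : Fin d → Fin d → ℂ) (p : Fin d → ℝ)
    (E : S → Matrix (Fin d) (Fin d) ℂ) :
    Real.log 2 * mutInfo B p E
      = (-∑ i, p i * Real.log (p i))
        - ∑ s, (∑ i, p i * outProb (E s) (B i)) *
            (-∑ i, (p i * outProb (E s) (B i) / ∑ j, p j * outProb (E s) (B j))
              * Real.log (p i * outProb (E s) (B i) / ∑ j, p j * outProb (E s) (B j))) := by
  rw [mutInfo, mul_sub, log2_shannon]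
  congr 1
  rw [Finset.mul_sum]
  refine Finset.sum_congr rfl fun s _ => ?_
  rw [show Real.log 2 * ((∑ i, p i * outProb (E s) (B i)) * shannonEntropy _)
      = (∑ i, p i * outProb (E s) (B i)) * (Real.log 2 * shannonEntropy _) by ring]
  rw [log2_shannon]

end SEG_I

/-- Two MUBs, arbitrary priors: `(1/(d p₁⁽¹⁾)) I₁ + (1/(d p₁⁽²⁾)) I₂ ≤ log₂ d`,
where `p₁⁽ᵐ⁾` is the largest prior probability of the m-th basis. -/
theorem two_mub_weighted_info_bound
    {S : Type*} [Fintype S] (d : ℕ) (hd : 2 ≤ d)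
    (B₁ B₂ : Fin d → Fin d → ℂ)
    (hB₁ : IsONB B₁) (hB₂ : IsONB B₂) (hMUB : AreMUB B₁ B₂)
    (p₁ p₂ : Fin d → ℝ)
    (hp₁ : ∀ i, 0 ≤ p₁ i) (hp₁sum : ∑ i, p₁ i = 1)
    (hp₂ : ∀ i, 0 ≤ p₂ i) (hp₂sum : ∑ i, p₂ i = 1)
    (q₁ q₂ : ℝ)
    (hq₁ : IsGreatest (Set.range p₁) q₁) (hq₂ : IsGreatest (Set.range p₂) q₂)
    (E : S → Matrix (Fin d) (Fin d) ℂ) (hE : IsPOVM E) :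
    (1 / (d * q₁)) * mutInfo B₁ p₁ E + (1 / (d * q₂)) * mutInfo B₂ p₂ E
      ≤ Real.logb 2 d := by
  have hd0 : (0:ℝ) < d := by
    have h : (0:ℕ) < d := lt_of_lt_of_le (by norm_num) hd
    exact_mod_cast h
  have hlog2 : (0:ℝ) < Real.log 2 := Real.log_pos (by norm_num)
  obtain ⟨hpsd, hsum1⟩ := hE
  have hout_nn : ∀ (s : S) (v : Fin d → ℂ), 0 ≤ outProb (E s) v := by
    intro s v
    have h := (hpsd s).dotProduct_mulVec_nonneg v
    have h2 := (Complex.le_def.mp h).1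
    simpa [outProb] using h2
  have hBnorm : ∀ (B : Fin d → Fin d → ℂ), IsONB B → ∀ i, (star (B i) ⬝ᵥ B i).re = 1 := by
    intro B hB i
    rw [hB i i, if_pos rfl]
    simp
  have hEone : ∀ v : Fin d → ℂ, ∑ s, outProb (E s) v = (star v ⬝ᵥ v).re := by
    intro v
    rw [show (∑ s, outProb (E s) v) = (∑ s, star v ⬝ᵥ (E s *ᵥ v)).re by
      rw [Complex.re_sum]; rfl]
    congr 1
    have h1 : ∀ k, (∑ s, (E s *ᵥ v) k) = v k := by
      intro k
      have h2 : ∑ s, (E s *ᵥ v) k = ((∑ s, E s) *ᵥ v) k := by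
        simp only [mulVec, dotProduct, Matrix.sum_apply, Finset.sum_mul]
        rw [Finset.sum_comm]
      rw [h2, hsum1, Matrix.one_mulVec]
    calc ∑ s, star v ⬝ᵥ (E s *ᵥ v) = star v ⬝ᵥ (fun k => ∑ s, (E s *ᵥ v) k) := by
          simp only [dotProduct, Finset.mul_sum]
          rw [Finset.sum_comm]
      _ = star v ⬝ᵥ v := by
          congr 1
          funext k
          exact h1 k
  have hasum1 : ∀ i, ∑ s, outProb (E s) (B₁ i) = 1 := fun i => by
    rw [hEone, hBnorm B₁ hB₁ i]
  have hasum2 : ∀ i, ∑ s, outProb (E s) (B₂ i) = 1 := fun i => by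
    rw [hEone, hBnorm B₂ hB₂ i]
  set t : S → ℝ := fun s => ∑ i, outProb (E s) (B₁ i) with htdef
  have ht2 : ∀ s, t s = ∑ i, outProb (E s) (B₂ i) := by
    intro s
    rw [htdef]
    simp only
    rw [sum_outProb_trace hB₁, sum_outProb_trace hB₂]
  have htnn : ∀ s, 0 ≤ t s := fun s => Finset.sum_nonneg fun i _ => hout_nn s _
  have htsum : ∑ s, t s = d := by
    rw [htdef]
    simp only
    rw [Finset.sum_comm]
    rw [show (∑ i, ∑ s, outProb (E s) (B₁ i)) = ∑ _i : Fin d, (1:ℝ) from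
      Finset.sum_congr rfl fun i _ => hasum1 i]
    simp
  set r : S → ℝ := fun s => t s / d with hrdef
  have hrnn : ∀ s, 0 ≤ r s := fun s => div_nonneg (htnn s) hd0.le
  have hrsum : ∑ s, r s = 1 := by
    rw [hrdef]
    simp only
    rw [← Finset.sum_div, htsum, div_self (ne_of_gt hd0)]
  have hr0t : ∀ s, r s = 0 → t s = 0 := by
    intro s hs
    rcases div_eq_zero_iff.mp hs with h | h
    · exact h
    · exact absurd h (ne_of_gt hd0)
  have hr01 : ∀ s i, r s = 0 → outProb (E s) (B₁ i) = 0 := by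
    intro s i hs
    have h0 : (∑ i, outProb (E s) (B₁ i)) = 0 := hr0t s hs
    have h' := (Finset.sum_eq_zero_iff_of_nonneg (fun i _ => hout_nn s (B₁ i))).mp h0
    exact h' i (Finset.mem_univ i)
  have hr02 : ∀ s i, r s = 0 → outProb (E s) (B₂ i) = 0 := by
    intro s i hs
    have h0 : (∑ i, outProb (E s) (B₂ i)) = 0 := by rw [← ht2 s]; exact hr0t s hs
    have h' := (Finset.sum_eq_zero_iff_of_nonneg (fun i _ => hout_nn s (B₂ i))).mp h0
    exact h' i (Finset.mem_univ i)
  have hqle1 : ∀ i, p₁ i ≤ q₁ := fun i => hq₁.2 ⟨i, rfl⟩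
  have hqle2 : ∀ i, p₂ i ≤ q₂ := fun i => hq₂.2 ⟨i, rfl⟩
  have hq1pos : 0 < q₁ := by
    by_contra h
    push_neg at h
    have hz : ∀ i, p₁ i = 0 := fun i => le_antisymm (le_trans (hqle1 i) h) (hp₁ i)
    rw [Finset.sum_eq_zero (fun i _ => hz i)] at hp₁sum
    norm_num at hp₁sum
  have hq2pos : 0 < q₂ := by
    by_contra h
    push_neg at h
    have hz : ∀ i, p₂ i = 0 := fun i => le_antisymm (le_trans (hqle2 i) h) (hp₂ i)
    rw [Finset.sum_eq_zero (fun i _ => hz i)] at hp₂sum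
    norm_num at hp₂sum
  -- the two information bounds
  have key1 := info_bound (fun s i => outProb (E s) (B₁ i)) p₁ r q₁
    (fun s i => hout_nn s _) hasum1 hp₁ hp₁sum hqle1 hq1pos.le hrnn hrsum hr01
  have key2 := info_bound (fun s i => outProb (E s) (B₂ i)) p₂ r q₂
    (fun s i => hout_nn s _) hasum2 hp₂ hp₂sum hqle2 hq2pos.le hrnn hrsum hr02
  have key1' : Real.log 2 * mutInfo B₁ p₁ E
      ≤ q₁ * ∑ s, ∑ i, outProb (E s) (B₁ i) *
          (Real.log (outProb (E s) (B₁ i)) - Real.log (r s)) := by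
    rw [mutInfo_log2]
    exact key1
  have key2' : Real.log 2 * mutInfo B₂ p₂ E
      ≤ q₂ * ∑ s, ∑ i, outProb (E s) (B₂ i) *
          (Real.log (outProb (E s) (B₂ i)) - Real.log (r s)) := by
    rw [mutInfo_log2]
    exact key2
  set D₁ : ℝ := ∑ s, ∑ i, outProb (E s) (B₁ i) *
      (Real.log (outProb (E s) (B₁ i)) - Real.log (r s)) with hD1
  set D₂ : ℝ := ∑ s, ∑ i, outProb (E s) (B₂ i) *
      (Real.log (outProb (E s) (B₂ i)) - Real.log (r s)) with hD2
  -- the per-outcome entropic bound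
  have hDbound : D₁ + D₂ ≤ d * Real.log d := by
    have hper : ∀ s, (∑ i, outProb (E s) (B₁ i) *
          (Real.log (outProb (E s) (B₁ i)) - Real.log (r s)))
        + (∑ i, outProb (E s) (B₂ i) *
          (Real.log (outProb (E s) (B₂ i)) - Real.log (r s)))
        ≤ t s * Real.log d := by
      intro s
      by_cases hts : t s = 0
      · have z1 : ∀ i, outProb (E s) (B₁ i) = 0 := by
          intro i
          have h0 : (∑ i, outProb (E s) (B₁ i)) = 0 := hts
          exact (Finset.sum_eq_zero_iff_of_nonneg (fun i _ => hout_nn s (B₁ i))).mp h0 i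
            (Finset.mem_univ i)
        have z2 : ∀ i, outProb (E s) (B₂ i) = 0 := by
          intro i
          have h0 : (∑ i, outProb (E s) (B₂ i)) = 0 := by rw [← ht2 s]; exact hts
          exact (Finset.sum_eq_zero_iff_of_nonneg (fun i _ => hout_nn s (B₂ i))).mp h0 i
            (Finset.mem_univ i)
        rw [Finset.sum_eq_zero (fun i _ => by rw [z1 i]; ring),
          Finset.sum_eq_zero (fun i _ => by rw [z2 i]; ring), hts]
        norm_num
      · have hts' : 0 < t s := lt_of_le_of_ne (htnn s) (Ne.symm hts)
        have hmix := eur_mixed hd0 hB₁ hB₂ hMUB (E s) (hpsd s) (t s) rfl hts'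
        have conv : ∀ (f : Fin d → ℝ), (∀ i, 0 ≤ f i) → ((∑ i, f i) = t s) →
            (∑ i, f i * (Real.log (f i) - Real.log (r s)))
            = t s * (∑ i, (f i / t s) * Real.log (f i / t s)) + t s * Real.log d := by
          intro f hf hfsum
          have e : ∀ i, f i * (Real.log (f i) - Real.log (r s))
              = t s * ((f i / t s) * Real.log (f i / t s)) + f i * Real.log d := by
            intro i
            by_cases hfi : f i = 0
            · rw [hfi]; simp
            · have hfi' : 0 < f i := lt_of_le_of_ne (hf i) (Ne.symm hfi)
              rw [hrdef]
              simp only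
              rw [Real.log_div (ne_of_gt hts') (ne_of_gt hd0),
                Real.log_div (ne_of_gt hfi') (ne_of_gt hts')]
              field_simp
              ring
          rw [Finset.sum_congr rfl fun i _ => e i, Finset.sum_add_distrib, ← Finset.mul_sum,
            ← Finset.sum_mul, hfsum]
        have c1 := conv (fun i => outProb (E s) (B₁ i)) (fun i => hout_nn s _) rfl
        have c2 := conv (fun i => outProb (E s) (B₂ i)) (fun i => hout_nn s _) (ht2 s).symm
        rw [c1, c2]
        have hA : (∑ i, (outProb (E s) (B₁ i) / t s) * Real.log (outProb (E s) (B₁ i) / t s))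
            + (∑ j, (outProb (E s) (B₂ j) / t s) * Real.log (outProb (E s) (B₂ j) / t s))
            + Real.log d ≤ 0 := by linarith [hmix]
        nlinarith [mul_nonneg hts'.le (neg_nonneg.mpr hA)]
    calc D₁ + D₂ = ∑ s, ((∑ i, outProb (E s) (B₁ i) *
            (Real.log (outProb (E s) (B₁ i)) - Real.log (r s)))
          + (∑ i, outProb (E s) (B₂ i) *
            (Real.log (outProb (E s) (B₂ i)) - Real.log (r s)))) := by
          rw [hD1, hD2, ← Finset.sum_add_distrib]
      _ ≤ ∑ s, t s * Real.log d := Finset.sum_le_sum fun s _ => hper s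
      _ = d * Real.log d := by rw [← Finset.sum_mul, htsum]
  -- final arithmetic
  have hfin : Real.log 2 * ((1 / (d * q₁)) * mutInfo B₁ p₁ E
      + (1 / (d * q₂)) * mutInfo B₂ p₂ E) ≤ Real.log d := by
    have c1 : (0:ℝ) ≤ 1 / (d * q₁) := by positivity
    have c2 : (0:ℝ) ≤ 1 / (d * q₂) := by positivity
    have h1 : (1 / ((d:ℝ) * q₁)) * (Real.log 2 * mutInfo B₁ p₁ E)
        ≤ (1 / ((d:ℝ) * q₁)) * (q₁ * D₁) := mul_le_mul_of_nonneg_left key1' c1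
    have h2 : (1 / ((d:ℝ) * q₂)) * (Real.log 2 * mutInfo B₂ p₂ E)
        ≤ (1 / ((d:ℝ) * q₂)) * (q₂ * D₂) := mul_le_mul_of_nonneg_left key2' c2
    have e1 : (1 / ((d:ℝ) * q₁)) * (q₁ * D₁) = D₁ / d := by
      field_simp
    have e2 : (1 / ((d:ℝ) * q₂)) * (q₂ * D₂) = D₂ / d := by
      field_simp
    have h3 : D₁ / d + D₂ / d ≤ Real.log d := by
      rw [← add_div, div_le_iff₀ hd0]
      calc D₁ + D₂ ≤ d * Real.log d := hDbound
        _ = Real.log d * d := mul_comm _ _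
    calc Real.log 2 * ((1 / (d * q₁)) * mutInfo B₁ p₁ E + (1 / (d * q₂)) * mutInfo B₂ p₂ E)
        = (1 / ((d:ℝ) * q₁)) * (Real.log 2 * mutInfo B₁ p₁ E)
          + (1 / ((d:ℝ) * q₂)) * (Real.log 2 * mutInfo B₂ p₂ E) := by ring
      _ ≤ (1 / ((d:ℝ) * q₁)) * (q₁ * D₁) + (1 / ((d:ℝ) * q₂)) * (q₂ * D₂) := add_le_add h1 h2
      _ = D₁ / d + D₂ / d := by rw [e1, e2]
      _ ≤ Real.log d := h3
  rw [Real.logb]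
  rw [le_div_iff₀ hlog2]
  calc ((1 / (d * q₁)) * mutInfo B₁ p₁ E + (1 / (d * q₂)) * mutInfo B₂ p₂ E) * Real.log 2
      = Real.log 2 * ((1 / (d * q₁)) * mutInfo B₁ p₁ E + (1 / (d * q₂)) * mutInfo B₂ p₂ E) :=
        mul_comm _ _
    _ ≤ Real.log d := hfin
end
end

section
/- Fix an orthonormal basis {|i⟩ : 1 ≤ i ≤ d} of ℂ^d, a prior probability distribution {p_i} on its basis states with maximal value p_1 = max_i p_i, and a POVM {M_s}. Let I denote the mutual information between Alice's input and Bob's outcome when Alice sends |i⟩ with probability p_i, and let Ĩ denote the mutual information when Alice sends |i⟩ with uniform probability 1/d and Bob uses the same POVM. Then (1/(d p_1)) I ≤ Ĩ. -/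
open scoped BigOperators ComplexOrder
open Matrix

noncomputable section

-- auxiliary lemmas
section Aux
open Finset

lemma gibbs {S : Type*} [Fintype S] (a b : S → ℝ) (ha : ∀ s, 0 ≤ a s)
    (hb : ∀ s, 0 ≤ b s) (hab : ∀ s, 0 < a s → 0 < b s)
    (hsum : ∑ s, b s ≤ ∑ s, a s) :
    ∑ s, a s * Real.logb 2 (b s / a s) ≤ 0 := by
  have hlog2 : (0:ℝ) < Real.log 2 := Real.log_pos (by norm_num)
  have step : ∀ s, a s * Real.logb 2 (b s / a s) ≤ (b s - a s) / Real.log 2 := by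
    intro s
    rcases eq_or_lt_of_le (ha s) with h | h
    · rw [← h]
      simp only [zero_mul, sub_zero]
      have := hb s
      positivity
    · have hbs := hab s h
      have hlog : Real.log (b s / a s) ≤ b s / a s - 1 :=
        Real.log_le_sub_one_of_pos (by positivity)
      rw [Real.logb, ← mul_div_assoc, div_le_div_iff_of_pos_right hlog2]
      calc a s * Real.log (b s / a s) ≤ a s * (b s / a s - 1) := by
            exact mul_le_mul_of_nonneg_left hlog (le_of_lt h)
        _ = b s - a s := by field_simp
  calc ∑ s, a s * Real.logb 2 (b s / a s) ≤ ∑ s, (b s - a s) / Real.log 2 :=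
        Finset.sum_le_sum fun s _ => step s
    _ = (∑ s, b s - ∑ s, a s) / Real.log 2 := by
        rw [← Finset.sum_div, Finset.sum_sub_distrib]
    _ ≤ 0 := by
        apply div_nonpos_of_nonpos_of_nonneg
        · linarith
        · exact le_of_lt hlog2

lemma gibbs' {S : Type*} [Fintype S] (a b : S → ℝ) (ha : ∀ s, 0 ≤ a s)
    (hb : ∀ s, 0 ≤ b s) (hab : ∀ s, 0 < a s → 0 < b s)
    (hsum : ∑ s, b s ≤ ∑ s, a s) :
    0 ≤ ∑ s, a s * Real.logb 2 (a s / b s) := by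
  have h := gibbs a b ha hb hab hsum
  have key : ∀ s, a s * Real.logb 2 (a s / b s) = -(a s * Real.logb 2 (b s / a s)) := by
    intro s
    rw [show (a s / b s) = (b s / a s)⁻¹ from (inv_div _ _).symm, Real.logb_inv]
    ring
  simp only [key, Finset.sum_neg_distrib]
  linarith

lemma mi_eq {d : ℕ} {S : Type*} [Fintype S] (P : Fin d → S → ℝ)
    (hP0 : ∀ i s, 0 ≤ P i s) (hP1 : ∀ i, ∑ s, P i s = 1)
    (p : Fin d → ℝ) (hp : ∀ i, 0 ≤ p i) :
    shannonEntropy p -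
      ∑ s, (∑ i, p i * P i s) *
        shannonEntropy (fun i => p i * P i s / ∑ j, p j * P j s) =
    ∑ s, ∑ i, p i * P i s * Real.logb 2 (P i s / ∑ j, p j * P j s) := by
  have hinner : ∀ i, ∑ s, -(p i * P i s * Real.logb 2 (p i))
      = -(p i * Real.logb 2 (p i)) := by
    intro i
    have h1 : ∀ s ∈ Finset.univ, -(p i * P i s * Real.logb 2 (p i))
        = P i s * -(p i * Real.logb 2 (p i)) := by intro s _; ring
    rw [Finset.sum_congr rfl h1, ← Finset.sum_mul, hP1, one_mul]
  have hH : shannonEntropy p = ∑ s, ∑ i, -(p i * P i s * Real.logb 2 (p i)) := by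
    rw [Finset.sum_comm, Finset.sum_congr rfl (fun i _ => hinner i)]
    exact (Finset.sum_neg_distrib _).symm
  rw [hH, ← Finset.sum_sub_distrib]
  apply Finset.sum_congr rfl
  intro s _
  set o : ℝ := ∑ j, p j * P j s with ho
  have ho0 : 0 ≤ o := Finset.sum_nonneg fun j _ => mul_nonneg (hp j) (hP0 j s)
  have hle : ∀ i, p i * P i s ≤ o :=
    fun i => Finset.single_le_sum (fun j _ => mul_nonneg (hp j) (hP0 j s))
      (Finset.mem_univ i)
  have hterm : ∀ i ∈ Finset.univ,
      o * ((p i * P i s / o) * Real.logb 2 (p i * P i s / o))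
        = p i * P i s * Real.logb 2 (p i * P i s / o) := by
    intro i _
    rcases eq_or_lt_of_le ho0 with h | h
    · have hz : p i * P i s = 0 := by
        have h2 := mul_nonneg (hp i) (hP0 i s)
        have h3 := hle i
        nlinarith
      rw [hz, ← h]; simp
    · field_simp
  unfold shannonEntropy
  rw [mul_neg, sub_neg_eq_add, Finset.mul_sum,
    Finset.sum_congr rfl hterm, ← Finset.sum_add_distrib]
  apply Finset.sum_congr rfl
  intro i _
  rcases eq_or_lt_of_le (mul_nonneg (hp i) (hP0 i s)) with h | hpos
  · rw [← h]; simp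
  · have hpi : p i ≠ 0 := by
      rintro h0; rw [h0] at hpos; simp at hpos
    have hPi : P i s ≠ 0 := by
      rintro h0; rw [h0] at hpos; simp at hpos
    have ho' : o ≠ 0 := ne_of_gt (lt_of_lt_of_le hpos (hle i))
    rw [Real.logb_div (ne_of_gt hpos) ho', Real.logb_mul hpi hPi,
      Real.logb_div hPi ho']
    ring
lemma main_real {d : ℕ} {S : Type*} [Fintype S] (hd : 2 ≤ d) (P : Fin d → S → ℝ)
    (hP0 : ∀ i s, 0 ≤ P i s) (hP1 : ∀ i, ∑ s, P i s = 1)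
    (p : Fin d → ℝ) (hp : ∀ i, 0 ≤ p i) (hpsum : ∑ i, p i = 1)
    (q : ℝ) (hqub : ∀ i, p i ≤ q) :
    ∑ s, ∑ i, p i * P i s * Real.logb 2 (P i s / ∑ j, p j * P j s)
      ≤ (d * q) * ∑ s, ∑ i, (1/(d:ℝ)) * P i s
          * Real.logb 2 (P i s / ∑ j, (1/(d:ℝ)) * P j s) := by
  have hd0 : (0:ℝ) < d := by
    have : (2:ℝ) ≤ d := by exact_mod_cast hd
    linarith
  set u : Fin d → ℝ := fun _ => 1/(d:ℝ) with hu
  have hu0 : ∀ i : Fin d, 0 < u i := fun i => by positivity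
  set op : S → ℝ := fun s => ∑ j, p j * P j s with hop
  set ou : S → ℝ := fun s => ∑ j, u j * P j s with hou
  have hop0 : ∀ s, 0 ≤ op s :=
    fun s => Finset.sum_nonneg fun j _ => mul_nonneg (hp j) (hP0 j s)
  have hou0 : ∀ s, 0 ≤ ou s :=
    fun s => Finset.sum_nonneg fun j _ => mul_nonneg (hu0 j).le (hP0 j s)
  have houP : ∀ s i, 0 < P i s → 0 < ou s := by
    intro s i hPi
    have h1 : u i * P i s ≤ ou s :=
      Finset.single_le_sum (fun j _ => mul_nonneg (hu0 j).le (hP0 j s)) (mem_univ i)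
    have h2 : 0 < u i * P i s := mul_pos (hu0 i) hPi
    linarith
  have hac : ∀ s, 0 < op s → 0 < ou s := by
    intro s hpos
    by_contra hcon
    push_neg at hcon
    have hz : ou s = 0 := le_antisymm hcon (hou0 s)
    have hPz : ∀ j, P j s = 0 := by
      intro j
      have h1 := (Finset.sum_eq_zero_iff_of_nonneg
        (fun j (_ : j ∈ univ) => mul_nonneg (hu0 j).le (hP0 j s))).1 hz j (mem_univ j)
      have h2 := (hu0 j).ne'
      exact (mul_eq_zero.1 h1).resolve_left h2
    have : op s = 0 := by
      rw [hop]; apply Finset.sum_eq_zero; intro j _; rw [hPz j, mul_zero]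
    linarith
  have hopsum : ∑ s, op s = 1 := by
    rw [hop, Finset.sum_comm]
    have : ∀ j : Fin d, ∑ s, p j * P j s = p j := by
      intro j; rw [← Finset.mul_sum, hP1, mul_one]
    rw [Finset.sum_congr rfl (fun j _ => this j), hpsum]
  have housum : ∑ s, ou s = 1 := by
    rw [hou, Finset.sum_comm]
    have : ∀ j : Fin d, ∑ s, u j * P j s = u j := by
      intro j; rw [← Finset.mul_sum, hP1, mul_one]
    rw [Finset.sum_congr rfl (fun j _ => this j), hu]
    rw [Finset.sum_const, Finset.card_fin, nsmul_eq_mul]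
    field_simp
  -- Step A : change denominator from op to ou
  have stepA : ∑ s, ∑ i, p i * P i s * Real.logb 2 (P i s / op s)
      ≤ ∑ s, ∑ i, p i * P i s * Real.logb 2 (P i s / ou s) := by
    have hsplit : ∀ s ∈ univ, ∑ i, p i * P i s * Real.logb 2 (P i s / op s)
        = (∑ i, p i * P i s * Real.logb 2 (P i s / ou s))
          + op s * Real.logb 2 (ou s / op s) := by
      intro s _
      have h1 : ∀ i ∈ univ, p i * P i s * Real.logb 2 (P i s / op s)
          = p i * P i s * Real.logb 2 (P i s / ou s)
            + p i * P i s * Real.logb 2 (ou s / op s) := by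
        intro i _
        rcases eq_or_lt_of_le (mul_nonneg (hp i) (hP0 i s)) with h | hpos
        · rw [← h]; simp
        · have hPi : 0 < P i s := by
            rcases (mul_pos_iff.1 hpos) with ⟨_, h2⟩ | ⟨h1, _⟩
            · exact h2
            · exact absurd h1 (not_lt.2 (hp i))
          have hopp : 0 < op s := by
            have := Finset.single_le_sum
              (fun j (_ : j ∈ univ) => mul_nonneg (hp j) (hP0 j s)) (mem_univ i)
            exact lt_of_lt_of_le hpos this
          have houp : 0 < ou s := houP s i hPi
          have harg : P i s / op s = (P i s / ou s) * (ou s / op s) := by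
            field_simp
          rw [harg, Real.logb_mul (by positivity) (by positivity)]
          ring
      rw [Finset.sum_congr rfl h1, Finset.sum_add_distrib, ← Finset.sum_mul]
    rw [Finset.sum_congr rfl hsplit, Finset.sum_add_distrib]
    have hgibbs := gibbs op ou hop0 hou0 hac (by rw [hopsum, housum])
    linarith
  -- Step B : relative entropies are nonnegative, priors bounded by q
  set D : Fin d → ℝ := fun i => ∑ s, P i s * Real.logb 2 (P i s / ou s) with hD
  have hD0 : ∀ i, 0 ≤ D i := by
    intro i
    exact gibbs' (fun s => P i s) ou (fun s => hP0 i s) hou0 (houP · i)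
      (by rw [housum, hP1])
  have hswap : ∀ r : Fin d → ℝ,
      ∑ s, ∑ i, r i * P i s * Real.logb 2 (P i s / ou s) = ∑ i, r i * D i := by
    intro r
    rw [Finset.sum_comm]
    apply Finset.sum_congr rfl
    intro i _
    rw [hD, Finset.mul_sum]
    apply Finset.sum_congr rfl
    intro s _
    ring
  have stepB : ∑ s, ∑ i, p i * P i s * Real.logb 2 (P i s / ou s)
      ≤ (d * q) * ∑ s, ∑ i, u i * P i s * Real.logb 2 (P i s / ou s) := by
    rw [hswap p, hswap u]
    have h1 : ∑ i, p i * D i ≤ ∑ i, q * D i :=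
      Finset.sum_le_sum fun i _ => mul_le_mul_of_nonneg_right (hqub i) (hD0 i)
    have h2 : (d:ℝ) * q * ∑ i, u i * D i = ∑ i, q * D i := by
      rw [Finset.mul_sum]
      apply Finset.sum_congr rfl
      intro i _
      rw [hu]
      field_simp
    linarith
  calc ∑ s, ∑ i, p i * P i s * Real.logb 2 (P i s / op s)
      ≤ ∑ s, ∑ i, p i * P i s * Real.logb 2 (P i s / ou s) := stepA
    _ ≤ (d * q) * ∑ s, ∑ i, u i * P i s * Real.logb 2 (P i s / ou s) := stepB

end Aux

/-- For a fixed basis and a fixed POVM, the mutual information `I` for arbitrary priors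
(with maximal prior probability `q`) and the mutual information `Ĩ` for uniform priors
satisfy `(1/(d q)) I ≤ Ĩ`. -/
theorem weighted_info_le_uniform_info
    {S : Type*} [Fintype S] (d : ℕ) (hd : 2 ≤ d)
    (B : Fin d → Fin d → ℂ) (hB : IsONB B)
    (p : Fin d → ℝ) (hp : ∀ i, 0 ≤ p i) (hpsum : ∑ i, p i = 1)
    (q : ℝ) (hq : IsGreatest (Set.range p) q)
    (E : S → Matrix (Fin d) (Fin d) ℂ) (hE : IsPOVM E) :
    (1 / (d * q)) * mutInfo B p E ≤ mutInfo B (fun _ => 1 / (d : ℝ)) E := by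
  have hd0 : (0:ℝ) < d := by
    have : (2:ℝ) ≤ d := by exact_mod_cast hd
    linarith
  have hqub : ∀ i, p i ≤ q := fun i => hq.2 ⟨i, rfl⟩
  have hq0 : 0 < q := by
    by_contra hcon
    push_neg at hcon
    have hz : ∀ i ∈ Finset.univ, p i = 0 :=
      fun i _ => le_antisymm (le_trans (hqub i) hcon) (hp i)
    rw [Finset.sum_congr rfl hz, Finset.sum_const, smul_zero] at hpsum
    norm_num at hpsum
  have hdq : (0:ℝ) < d * q := mul_pos hd0 hq0
  set P : Fin d → S → ℝ := fun i s => outProb (E s) (B i) with hP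
  have hP0 : ∀ i s, 0 ≤ P i s := by
    intro i s
    have h := (hE.1 s).dotProduct_mulVec_nonneg (B i)
    rw [Complex.le_def] at h
    exact h.1
  have hP1 : ∀ i, ∑ s, P i s = 1 := by
    intro i
    have hv : star (B i) ⬝ᵥ B i = 1 := by simpa using hB i i
    rw [hP]
    unfold outProb
    rw [← Complex.re_sum]
    have key : ∑ s, star (B i) ⬝ᵥ (E s).mulVec (B i)
        = star (B i) ⬝ᵥ (∑ s, E s).mulVec (B i) := by
      simp only [Matrix.mulVec, dotProduct, Matrix.sum_apply, Finset.sum_mul,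
        Finset.mul_sum]
      rw [Finset.sum_comm]
      apply Finset.sum_congr rfl; intro k _
      rw [Finset.sum_comm]
    rw [key, hE.2, Matrix.one_mulVec, hv]
    simp
  have hu0 : ∀ i : Fin d, (0:ℝ) ≤ 1/(d:ℝ) := fun _ => by positivity
  have hmp : mutInfo B p E
      = ∑ s, ∑ i, p i * P i s * Real.logb 2 (P i s / ∑ j, p j * P j s) :=
    mi_eq P hP0 hP1 p hp
  have hmu : mutInfo B (fun _ => 1 / (d : ℝ)) E
      = ∑ s, ∑ i, (1/(d:ℝ)) * P i s
          * Real.logb 2 (P i s / ∑ j, (1/(d:ℝ)) * P j s) :=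
    mi_eq P hP0 hP1 (fun _ => 1/(d:ℝ)) hu0
  rw [hmp, hmu]
  have hmain := main_real hd P hP0 hP1 p hp hpsum q hqub
  rw [div_mul_eq_mul_div, one_mul, div_le_iff₀ hdq]
  linarith [hmain]
end
end

section
/- For every integer d ≥ 2, setting M = d+1 and K = ⌊Md/(d+M−1)⌋ = ⌊(d+1)/2⌋, the quantity B(d) = M log₂(d/K) − (K+1)(M − K(d+M−1)/d) log₂(1 + 1/K) satisfies d − 1 ≤ B(d) < d; in particular B(d) is strictly less than d. -/
open scoped BigOperators ComplexOrder
open Matrix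

noncomputable section

private lemma two_lt_pow_aux (n : ℕ) (hn : 1 ≤ n) : (2:ℝ) < (1 + 1/(n:ℝ))^(n+1) := by
  have hn0 : (0:ℝ) < n := by exact_mod_cast hn
  have hb := one_add_mul_le_pow (a := 1/(n:ℝ)) (le_trans (by norm_num) (by positivity : (0:ℝ) ≤ 1/(n:ℝ))) (n+1)
  push_cast at hb
  have h1 : (0:ℝ) < 1/n := by positivity
  have h2 : ((n:ℝ)+1) * (1/n) = 1 + 1/n := by field_simp
  nlinarith
private lemma pow_le_four_aux (n : ℕ) (hn : 1 ≤ n) : (1 + 1/(n:ℝ))^(n+1) ≤ 4 := by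
  match n, hn with
  | 1, _ => norm_num
  | 2, _ => norm_num
  | (k+3), _ =>
    set m : ℕ := k+3 with hmdef
    have hm : (3:ℝ) ≤ m := by exact_mod_cast (by omega : 3 ≤ m)
    have hm0 : (0:ℝ) < m := by linarith
    have h1 : (1:ℝ) + 1/m ≤ Real.exp (1/m) := by
      have := Real.add_one_le_exp (1/(m:ℝ)); linarith
    have h2 : (1 + 1/(m:ℝ))^(m+1) ≤ Real.exp (1/m) ^ (m+1) :=
      pow_le_pow_left₀ (by positivity) h1 _
    have h3 : Real.exp (1/(m:ℝ)) ^ (m+1) = Real.exp (((m:ℝ)+1) * (1/m)) := by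
      rw [← Real.exp_nat_mul]; push_cast; ring_nf
    have h4 : ((m:ℝ)+1) * (1/m) ≤ Real.log 4 := by
      have hl : Real.log 4 = 2 * Real.log 2 := by
        rw [show (4:ℝ) = 2^2 by norm_num, Real.log_pow]; push_cast; ring
      have hlt := Real.log_two_gt_d9
      have h5 : ((m:ℝ)+1) * (1/m) ≤ 4/3 := by
        rw [mul_one_div, div_le_div_iff₀ hm0 (by norm_num)]; linarith
      linarith
    calc (1 + 1/(m:ℝ))^(m+1) ≤ Real.exp (((m:ℝ)+1)*(1/m)) := h3 ▸ h2
      _ ≤ Real.exp (Real.log 4) := Real.exp_le_exp.mpr h4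
      _ = 4 := Real.exp_log (by norm_num)
private lemma core_aux (n : ℕ) (hn : 1 ≤ n) :
    1 < ((n:ℝ)+1) * Real.logb 2 (1 + 1/(n:ℝ)) ∧ ((n:ℝ)+1) * Real.logb 2 (1 + 1/(n:ℝ)) ≤ 2 := by
  have hn0 : (0:ℝ) < n := by exact_mod_cast hn
  have hpow : Real.logb 2 ((1 + 1/(n:ℝ))^(n+1)) = ((n:ℝ)+1) * Real.logb 2 (1 + 1/(n:ℝ)) := by
    rw [Real.logb_pow]; push_cast; ring
  constructor
  · have h := Real.logb_lt_logb (b := 2) one_lt_two (by norm_num) (two_lt_pow_aux n hn)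
    rw [hpow] at h
    simpa using h
  · have h := (Real.logb_le_logb (b := 2) one_lt_two (by positivity) (by norm_num)).mpr (pow_le_four_aux n hn)
    rw [hpow] at h
    have h4 : Real.logb 2 (4:ℝ) = 2 := by
      rw [show (4:ℝ) = 2^2 by norm_num, Real.logb_pow]; simp
    linarith [h4 ▸ h]

/-- For `M = d+1` and `K = ⌊Md/(d+M−1)⌋ = ⌊(d+1)/2⌋`, the bound
`B(d) = M log₂(d/K) − (K+1)(M − K(d+M−1)/d) log₂(1+1/K)` satisfies `d−1 ≤ B(d) < d`. -/
theorem dplus1_bound_between (d M K : ℕ) (hd : 2 ≤ d) (hM : M = d + 1)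
    (hK : K = M * d / (d + M - 1)) :
    K = (d + 1) / 2 ∧
    (d : ℝ) - 1 ≤ (M : ℝ) * Real.logb 2 ((d : ℝ) / (K : ℝ))
        - ((K : ℝ) + 1) * ((M : ℝ) - (K : ℝ) * ((d : ℝ) + (M : ℝ) - 1) / (d : ℝ))
          * Real.logb 2 (1 + 1 / (K : ℝ)) ∧
    (M : ℝ) * Real.logb 2 ((d : ℝ) / (K : ℝ))
        - ((K : ℝ) + 1) * ((M : ℝ) - (K : ℝ) * ((d : ℝ) + (M : ℝ) - 1) / (d : ℝ))
          * Real.logb 2 (1 + 1 / (K : ℝ)) < (d : ℝ) := by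
  subst hM
  have hKeq : K = (d + 1) / 2 := by
    rw [hK, show d + (d + 1) - 1 = 2 * d by omega, show (d+1) * d / (2*d) = (d+1)*d/(d*2) by ring_nf,
      ← Nat.div_div_eq_div_mul, Nat.mul_div_cancel _ (by omega : 0 < d)]
  refine ⟨hKeq, ?_⟩
  rcases Nat.even_or_odd d with ⟨m, rfl⟩ | ⟨m, rfl⟩
  · -- d = m + m, K = m
    have hm : 1 ≤ m := by omega
    obtain rfl : m = K := by omega
    have hm0 : (0:ℝ) < m := by exact_mod_cast hm
    obtain ⟨hcore1, hcore2⟩ := core_aux m hm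
    have hlog : Real.logb 2 ((↑(m+m) : ℝ) / (m:ℝ)) = 1 := by
      rw [show ((↑(m+m):ℝ)) / (m:ℝ) = 2 by push_cast; field_simp; ring]
      simp
    rw [hlog]
    have hco : ((m:ℝ)) * ((↑(m+m):ℝ) + (↑(m+m+1):ℝ) - 1) / (↑(m+m):ℝ) = 2 * m := by
      push_cast; field_simp; ring
    rw [hco]
    push_cast
    constructor <;> nlinarith [hcore1, hcore2]
  · -- d = 2m+1, K = m+1
    have hm : 1 ≤ m := by omega
    have hKm : K = m + 1 := by omega
    subst hKm
    have hm0 : (0:ℝ) < m := by exact_mod_cast hm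
    obtain ⟨hcore1, hcore2⟩ := core_aux (2*m+1) (by omega)
    push_cast at hcore1 hcore2 ⊢
    have hco : ((m:ℝ)+1) * ((2*(m:ℝ)+1) + (2*(m:ℝ)+1+1) - 1) / (2*(m:ℝ)+1) = 2*(m:ℝ)+2 := by
      field_simp; ring
    rw [hco]
    have hlog : Real.logb 2 ((2*(m:ℝ)+1) / ((m:ℝ)+1)) = 1 - Real.logb 2 (1 + 1/(2*(m:ℝ)+1)) := by
      have hx : (2*(m:ℝ)+1) / ((m:ℝ)+1) ≠ 0 := by positivity
      have hy : (1:ℝ) + 1/(2*(m:ℝ)+1) ≠ 0 := by positivity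
      have := Real.logb_mul (b := 2) hx hy
      rw [show (2*(m:ℝ)+1) / ((m:ℝ)+1) * (1 + 1/(2*(m:ℝ)+1)) = 2 by field_simp; ring] at this
      rw [Real.logb_self_eq_one one_lt_two] at this
      linarith
    rw [hlog]
    constructor <;> nlinarith [hcore1, hcore2]
end
end

section
/- Suppose there exist d+1 pairwise mutually unbiased bases of ℂ^d, Alice prepares a qudit in a basis state of one of them, choosing each of the d basis states of the chosen basis with equal prior probability 1/d, and Bob measures with an arbitrary POVM. Then the total information satisfies Σ_{m=1}^{d+1} I_m < d; equivalently, the average mutual information per basis is less than d/(d+1) bits. -/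
open scoped BigOperators ComplexOrder
open Matrix

noncomputable section

section Aux

def proj {d : ℕ} (v : Fin d → ℂ) : Matrix (Fin d) (Fin d) ℂ :=
  Matrix.vecMulVec v (star v)

variable {d : ℕ}

lemma proj_apply (v : Fin d → ℂ) (k l : Fin d) :
    proj v k l = v k * (starRingEnd ℂ) (v l) := rfl

lemma proj_herm (v : Fin d → ℂ) : (proj v)ᴴ = proj v := by
  ext k l
  simp [proj_apply, conjTranspose_apply, mul_comm]

lemma trace_proj (v : Fin d → ℂ) : (proj v).trace = star v ⬝ᵥ v := by
  simp [Matrix.trace, Matrix.diag, proj_apply, dotProduct, mul_comm]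

lemma trace_proj_mul (v : Fin d → ℂ) (A : Matrix (Fin d) (Fin d) ℂ) :
    (proj v * A).trace = star v ⬝ᵥ A.mulVec v := by
  simp only [Matrix.trace, Matrix.diag, Matrix.mul_apply, proj_apply, dotProduct,
    Matrix.mulVec, Pi.star_apply]
  rw [Finset.sum_comm]
  congr 1; ext l
  rw [Finset.mul_sum]
  congr 1; ext k
  simp [Pi.star_apply, RingHom.coe_comp]
  ring

lemma trace_proj_mul_proj (v w : Fin d → ℂ) :
    (proj v * proj w).trace = (‖star v ⬝ᵥ w‖ ^ 2 : ℝ) := by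
  rw [trace_proj_mul]
  have : (proj w).mulVec v = (star w ⬝ᵥ v) • w := by
    ext k
    simp only [proj_apply, Matrix.mulVec, dotProduct, Pi.smul_apply, smul_eq_mul,
      Finset.sum_mul, Pi.star_apply]
    congr 1; funext l; simp [Complex.star_def]; ring
  rw [this]
  rw [dotProduct_smul]
  have h1 : star w ⬝ᵥ v = (starRingEnd ℂ) (star v ⬝ᵥ w) := by
    simp [dotProduct, map_sum, mul_comm]
  rw [h1, smul_eq_mul, mul_comm, Complex.mul_conj]
  rw [Complex.normSq_eq_norm_sq]

lemma sum_dot_onb {B : Fin d → Fin d → ℂ} (hB : IsONB B) (A : Matrix (Fin d) (Fin d) ℂ) :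
    ∑ i, star (B i) ⬝ᵥ A.mulVec (B i) = A.trace := by
  classical
  set V : Matrix (Fin d) (Fin d) ℂ := Matrix.of (fun k i => B i k) with hV
  have hVV : Vᴴ * V = 1 := by
    ext i j
    simpa [Matrix.mul_apply, Matrix.conjTranspose_apply, Matrix.one_apply, dotProduct,
      Complex.star_def, hV] using hB i j
  have hVV' : V * Vᴴ = 1 := mul_eq_one_comm.mp hVV
  have key : ∑ i, star (B i) ⬝ᵥ A.mulVec (B i) = (Vᴴ * A * V).trace := by
    simp only [Matrix.trace, Matrix.diag, Matrix.mul_apply, dotProduct, Matrix.mulVec,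
      Matrix.conjTranspose_apply, hV, Matrix.of_apply, Pi.star_apply]
    congr 1; funext i
    simp_rw [Finset.mul_sum, Finset.sum_mul]
    rw [Finset.sum_comm]
    congr 1; funext l
    congr 1; funext k
    simp [Complex.star_def]; ring
  rw [key, Matrix.trace_mul_cycle, hVV', Matrix.one_mul]

lemma trace_sq_le {A : Matrix (Fin d) (Fin d) ℂ} (hA : A.PosSemidef) :
    ((A * A).trace).re ≤ (A.trace.re) ^ 2 := by
  classical
  have h := hA.1
  set U : Matrix (Fin d) (Fin d) ℂ := (h.eigenvectorUnitary : Matrix (Fin d) (Fin d) ℂ) with hU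
  set D : Matrix (Fin d) (Fin d) ℂ := Matrix.diagonal (RCLike.ofReal ∘ h.eigenvalues) with hD
  have hs : A = U * D * star U := h.spectral_theorem
  have hUU : star U * U = 1 := by
    have := h.eigenvectorUnitary.2
    rw [Unitary.mem_iff] at this
    exact this.1
  have hAA : (A * A).trace = (D * D).trace := by
    rw [hs]
    have e : (U * D * star U) * (U * D * star U) = U * (D * (star U * U) * D) * star U := by
      noncomm_ring
    rw [e, hUU, Matrix.mul_one, Matrix.trace_mul_cycle, hUU, Matrix.one_mul]
  have hTr : A.trace = D.trace := by
    rw [hs, Matrix.trace_mul_cycle, hUU, Matrix.one_mul]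
  have hDD : ((D * D).trace).re = ∑ i, (h.eigenvalues i) ^ 2 := by
    rw [hD, Matrix.diagonal_mul_diagonal, Matrix.trace_diagonal]
    push_cast
    simp [Complex.ext_iff, pow_two]
  have hDt : (D.trace).re = ∑ i, h.eigenvalues i := by
    rw [hD, Matrix.trace_diagonal]
    push_cast
    simp [Complex.ext_iff]
  rw [hAA, hTr, hDD, hDt]
  exact Finset.sum_sq_le_sq_sum_of_nonneg (fun i _ => hA.eigenvalues_nonneg i)

end Aux

set_option maxHeartbeats 1000000 in
lemma mub_sum_sq_le {d : ℕ} (hd0 : 0 < d) {B : Fin (d+1) → Fin d → Fin d → ℂ}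
    (hB : ∀ m, IsONB (B m)) (hMUB : ∀ m n, m ≠ n → AreMUB (B m) (B n))
    {A : Matrix (Fin d) (Fin d) ℂ} (hA : A.PosSemidef) :
    ∑ m, ∑ i, (outProb A (B m i)) ^ 2 ≤ (A.trace.re) ^ 2 + ((A * A).trace).re := by
  classical
  set r : Fin (d+1) → Fin d → ℝ := fun m i => outProb A (B m i) with hr
  have ha : ∀ m i, star (B m i) ⬝ᵥ A.mulVec (B m i) = ((r m i : ℝ) : ℂ) := by
    intro m i
    have h0 := hA.dotProduct_mulVec_nonneg (B m i)
    rw [Complex.nonneg_iff] at h0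
    exact Complex.ext rfl h0.2.symm
  set t : ℝ := A.trace.re with htdef
  have htr : ∀ m, ∑ i, r m i = t := by
    intro m
    have h1 := sum_dot_onb (hB m) A
    simp_rw [ha m] at h1
    have := congrArg Complex.re h1
    simpa using this
  have ht : A.trace = ((t : ℝ) : ℂ) := by
    have h0 := sum_dot_onb (hB 0) A
    simp_rw [ha 0] at h0
    rw [← h0, ← Complex.ofReal_sum, htr 0]
  set S : ℝ := ∑ m, ∑ i, (r m i) ^ 2 with hS
  set Q : Matrix (Fin d) (Fin d) ℂ := ∑ m, ∑ i, ((r m i : ℝ) : ℂ) • proj (B m i) with hQ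
  set X : Matrix (Fin d) (Fin d) ℂ := Q - A - ((t : ℝ) : ℂ) • 1 with hX
  have hd' : (d : ℂ) ≠ 0 := by exact_mod_cast hd0.ne'
  have htQ : Q.trace = ((d : ℂ) + 1) * (t : ℂ) := by
    simp only [hQ, Matrix.trace_sum, Matrix.trace_smul, trace_proj, smul_eq_mul]
    have h1 : ∀ m i, star (B m i) ⬝ᵥ B m i = (1 : ℂ) := by
      intro m i; simpa using hB m i i
    simp_rw [h1, mul_one, ← Complex.ofReal_sum, htr]
    rw [Finset.sum_const, Finset.card_univ, Fintype.card_fin, nsmul_eq_mul]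
    push_cast
    ring
  have htQA : (Q * A).trace = ((S : ℝ) : ℂ) := by
    simp only [hQ, Finset.sum_mul, Matrix.smul_mul, Matrix.trace_sum, Matrix.trace_smul,
      trace_proj_mul, smul_eq_mul]
    simp_rw [ha]
    push_cast [hS]
    congr 1; funext m; congr 1; funext i; ring
  have htAQ : (A * Q).trace = ((S : ℝ) : ℂ) := by
    rw [Matrix.trace_mul_comm, htQA]
  set g : Fin (d+1) → Fin (d+1) → ℂ := fun m n => ∑ i, ∑ j,
      ((r m i : ℝ) : ℂ) * (((r n j : ℝ) : ℂ) * ((‖star (B n j) ⬝ᵥ B m i‖ ^ 2 : ℝ) : ℂ))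
    with hg
  have hgd : ∀ m, g m m = ∑ i, ((r m i : ℝ) : ℂ) ^ 2 := by
    intro m
    simp only [hg]
    congr 1; funext i
    have hni : ∀ j, (‖star (B m j) ⬝ᵥ B m i‖ ^ 2 : ℝ) = if i = j then 1 else 0 := by
      intro j
      rw [hB m j i]
      by_cases h : i = j
      · simp [h]
      · simp [h, (Ne.symm h : j ≠ i)]
    simp_rw [hni]
    rw [Finset.sum_eq_single i]
    · simp [pow_two]
    · intro j _ hj; simp [Ne.symm hj]
    · intro h; exact absurd (Finset.mem_univ i) h
  have hgo : ∀ m n, m ≠ n → g m n = ((t : ℝ) : ℂ) ^ 2 / (d : ℂ) := by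
    intro m n hmn
    have hmu := hMUB n m (Ne.symm hmn)
    have e : ∀ i j, ((‖star (B n j) ⬝ᵥ B m i‖ ^ 2 : ℝ) : ℂ) = 1 / (d : ℂ) := by
      intro i j; rw [hmu j i]; push_cast; ring
    simp only [hg]
    simp_rw [e]
    have h1 : ∑ j, ((r n j : ℝ) : ℂ) * (1 / (d : ℂ)) = ((t : ℝ) : ℂ) / d := by
      rw [← Finset.sum_mul, ← Complex.ofReal_sum, htr n]
      ring
    simp_rw [← Finset.mul_sum, h1]
    rw [← Finset.sum_mul, ← Complex.ofReal_sum, htr m]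
    ring
  have hQQ : (Q * Q).trace = ((S : ℝ) : ℂ) + ((d : ℂ) + 1) * ((t : ℝ) : ℂ) ^ 2 := by
    have expand : (Q * Q).trace = ∑ m, ∑ n, g m n := by
      simp only [hQ, Finset.sum_mul, Finset.mul_sum, Matrix.smul_mul, Matrix.mul_smul,
        Matrix.trace_sum, Matrix.trace_smul, trace_proj_mul_proj, smul_eq_mul, hg]
      exact Finset.sum_congr rfl (fun m _ => Finset.sum_comm)
    rw [expand]
    have hrow : ∀ m, ∑ n, g m n = (∑ i, ((r m i : ℝ) : ℂ) ^ 2) + ((t : ℝ) : ℂ) ^ 2 := by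
      intro m
      rw [← Finset.add_sum_erase _ _ (Finset.mem_univ m), hgd m]
      congr 1
      rw [Finset.sum_congr rfl (fun n hn => hgo m n (Ne.symm (Finset.ne_of_mem_erase hn)))]
      rw [Finset.sum_const, Finset.card_erase_of_mem (Finset.mem_univ m), Finset.card_univ,
        Fintype.card_fin, Nat.add_sub_cancel, nsmul_eq_mul]
      field_simp
    rw [Finset.sum_congr rfl (fun m _ => hrow m), Finset.sum_add_distrib,
      Finset.sum_const, Finset.card_univ, Fintype.card_fin, nsmul_eq_mul]
    have hsum : ∑ m, ∑ i, ((r m i : ℝ) : ℂ) ^ 2 = ((S : ℝ) : ℂ) := by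
      rw [hS]; push_cast; rfl
    rw [hsum]
    push_cast
    ring
  have hXH : Xᴴ = X := by
    have hQH : Qᴴ = Q := by
      rw [hQ, Matrix.conjTranspose_sum]
      congr 1; funext m
      rw [Matrix.conjTranspose_sum]
      congr 1; funext i
      rw [Matrix.conjTranspose_smul, proj_herm]
      simp [Complex.star_def, Complex.conj_ofReal]
    rw [hX, Matrix.conjTranspose_sub, Matrix.conjTranspose_sub, Matrix.conjTranspose_smul,
      Matrix.conjTranspose_one, hQH, hA.1.eq]
    simp [Complex.star_def, Complex.conj_ofReal]
  have hpos : 0 ≤ ((Xᴴ * X).trace).re := by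
    have e : ((Xᴴ * X).trace) = ∑ k, ∑ j, (starRingEnd ℂ) (X j k) * X j k := by
      simp [Matrix.trace, Matrix.diag, Matrix.mul_apply, Matrix.conjTranspose_apply,
        Complex.star_def]
    rw [e, Complex.re_sum]
    apply Finset.sum_nonneg
    intro k _
    rw [Complex.re_sum]
    apply Finset.sum_nonneg
    intro j _
    rw [mul_comm, Complex.mul_conj]
    simp [Complex.normSq_nonneg]
  have hXXtr : ((X * X).trace) = -((S : ℝ) : ℂ) + (A * A).trace + ((t ^ 2 : ℝ) : ℂ) := by
    have e : X * X = Q * Q - Q * A - (t : ℂ) • Q - A * Q + A * A + (t : ℂ) • A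
        - (t : ℂ) • Q + (t : ℂ) • A + ((t : ℂ) * (t : ℂ)) • 1 := by
      rw [hX]
      simp only [Matrix.sub_mul, Matrix.mul_sub, Matrix.smul_mul, Matrix.mul_smul,
        Matrix.mul_one, Matrix.one_mul, smul_smul, smul_sub, smul_add]
      abel
    rw [e]
    simp only [Matrix.trace_add, Matrix.trace_sub, Matrix.trace_smul, smul_eq_mul,
      Matrix.trace_one]
    rw [htQ, htQA, htAQ, hQQ, ht]
    rw [Fintype.card_fin]
    push_cast
    ring
  have key : (0 : ℝ) ≤ -S + ((A * A).trace).re + t ^ 2 := by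
    have h2 := hpos
    rw [hXH, hXXtr] at h2
    simpa [← Complex.ofReal_pow] using h2
  have final : S ≤ t ^ 2 + ((A * A).trace).re := by linarith
  exact final

lemma sum_mul_log_le {d : ℕ} (q : Fin d → ℝ) (hq : ∀ i, 0 ≤ q i) (h1 : ∑ i, q i = 1) :
    ∑ i, q i * Real.log (q i) ≤ Real.log (∑ i, (q i) ^ 2) := by
  classical
  set c : ℝ := ∑ i, (q i) ^ 2 with hc
  have hex : ∃ i, q i ≠ 0 := by
    by_contra h
    push_neg at h
    simp [h] at h1
  obtain ⟨i0, hi0⟩ := hex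
  have hc0 : 0 < c := by
    have h2 : (q i0) ^ 2 ≤ c := by
      apply Finset.single_le_sum (f := fun i => (q i)^2) (fun i _ => sq_nonneg _)
        (Finset.mem_univ i0)
    have : 0 < (q i0) ^ 2 := by positivity
    linarith
  have hterm : ∀ i, q i * Real.log (q i) ≤ (q i) ^ 2 / c - q i + q i * Real.log c := by
    intro i
    rcases eq_or_lt_of_le (hq i) with h | h
    · simp [← h]
    · have hlog : Real.log (q i / c) ≤ q i / c - 1 :=
        Real.log_le_sub_one_of_pos (div_pos h hc0)
      rw [Real.log_div h.ne' hc0.ne'] at hlog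
      have := mul_le_mul_of_nonneg_left hlog (le_of_lt h)
      have e : q i * (q i / c - 1) = (q i)^2/c - q i := by ring
      nlinarith
  calc ∑ i, q i * Real.log (q i)
      ≤ ∑ i, ((q i) ^ 2 / c - q i + q i * Real.log c) := Finset.sum_le_sum (fun i _ => hterm i)
    _ = (∑ i, (q i)^2) / c - (∑ i, q i) + (∑ i, q i) * Real.log c := by
        rw [Finset.sum_add_distrib, Finset.sum_sub_distrib, Finset.sum_div, Finset.sum_mul]
    _ = Real.log c := by
        rw [← hc, h1, div_self hc0.ne']
        ring

lemma entropy_ge_neg_logb {d : ℕ} (q : Fin d → ℝ) (hq : ∀ i, 0 ≤ q i) (h1 : ∑ i, q i = 1) :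
    -Real.logb 2 (∑ i, (q i) ^ 2) ≤ shannonEntropy q := by
  have key := sum_mul_log_le q hq h1
  have hlog2 : 0 < Real.log 2 := Real.log_pos (by norm_num)
  rw [shannonEntropy]
  simp_rw [Real.logb, ← mul_div_assoc, ← Finset.sum_div]
  rw [neg_le_neg_iff, div_le_div_iff_of_pos_right hlog2]
  exact key

lemma sum_neg_logb_ge {k : ℕ} (hk : 0 < k) (c : Fin k → ℝ) (hc : ∀ m, 0 < c m)
    (hsum : ∑ m, c m ≤ 2) :
    (k : ℝ) * Real.logb 2 ((k : ℝ) / 2) ≤ ∑ m, -Real.logb 2 (c m) := by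
  have hlog2 : 0 < Real.log 2 := Real.log_pos (by norm_num)
  have hk' : (0:ℝ) < k := by exact_mod_cast hk
  have hterm : ∀ m : Fin k, Real.log (c m) + Real.log ((k:ℝ)/2)
      ≤ c m * ((k:ℝ)/2) - 1 := by
    intro m
    have h := Real.log_le_sub_one_of_pos (mul_pos (hc m) (by positivity : (0:ℝ) < (k:ℝ)/2))
    rwa [Real.log_mul (hc m).ne' (by positivity)] at h
  have hsum2 : ∑ m, Real.log (c m) + (k:ℝ) * Real.log ((k:ℝ)/2) ≤ 0 := by
    have := Finset.sum_le_sum (fun m (_ : m ∈ Finset.univ) => hterm m)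
    rw [Finset.sum_add_distrib, Finset.sum_const, Finset.card_univ, Fintype.card_fin,
      nsmul_eq_mul, Finset.sum_sub_distrib, Finset.sum_const, Finset.card_univ,
      Fintype.card_fin, nsmul_eq_mul, ← Finset.sum_mul] at this
    nlinarith
  simp_rw [Real.logb]
  rw [← mul_div_assoc]
  simp_rw [← neg_div]
  rw [← Finset.sum_div, div_le_div_iff_of_pos_right hlog2, Finset.sum_neg_distrib]
  linarith

lemma final_numeric {d : ℕ} (hd : 2 ≤ d) :
    ((d : ℝ) + 1) * (Real.logb 2 d - Real.logb 2 (((d : ℝ) + 1) / 2)) < d := by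
  have hD1 : (0:ℝ) < (d:ℝ) := by exact_mod_cast lt_of_lt_of_le two_pos hd
  have hD2 : (0:ℝ) < (d:ℝ) + 1 := by linarith
  have hlog2 : 0 < Real.log 2 := Real.log_pos (by norm_num)
  have hlog2' : Real.log 2 < 1 := by
    have := Real.log_two_lt_d9
    linarith
  set y : ℝ := (d:ℝ) / ((d:ℝ) + 1) with hy
  have hy0 : 0 < y := div_pos hD1 hD2
  have hy1 : y - 1 = -(1/((d:ℝ)+1)) := by
    rw [hy]; field_simp; ring
  have hyneg : y - 1 < 0 := by
    rw [hy1]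
    have : (0:ℝ) < 1/((d:ℝ)+1) := by positivity
    linarith
  have h1 : Real.log y ≤ y - 1 := Real.log_le_sub_one_of_pos hy0
  have h2 : Real.log y < (y - 1) * Real.log 2 := by nlinarith
  have h3 : ((d:ℝ)+1) * Real.log y < ((d:ℝ)+1) * ((y-1) * Real.log 2) :=
    mul_lt_mul_of_pos_left h2 hD2
  have h4 : ((d:ℝ)+1) * ((y-1) * Real.log 2) = -Real.log 2 := by
    rw [hy1]; field_simp
  have key : ((d:ℝ)+1) * (Real.log y + Real.log 2) < (d:ℝ) * Real.log 2 := by nlinarith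
  have hlogy : Real.log y = Real.log (d:ℝ) - Real.log ((d:ℝ)+1) := Real.log_div hD1.ne' hD2.ne'
  have expand : Real.logb 2 (d:ℝ) - Real.logb 2 (((d:ℝ)+1)/2)
      = (Real.log y + Real.log 2) / Real.log 2 := by
    rw [Real.logb, Real.logb, Real.log_div hD2.ne' (two_ne_zero), hlogy]
    field_simp
    ring
  rw [expand, ← mul_div_assoc, div_lt_iff₀ hlog2]
  exact key

lemma outProb_nonneg {d : ℕ} {A : Matrix (Fin d) (Fin d) ℂ} (hA : A.PosSemidef)
    (v : Fin d → ℂ) : 0 ≤ outProb A v := by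
  have h := hA.dotProduct_mulVec_nonneg v
  rw [Complex.nonneg_iff] at h
  exact h.1

lemma sum_outProb {d : ℕ} {B : Fin d → Fin d → ℂ} (hB : IsONB B)
    (A : Matrix (Fin d) (Fin d) ℂ) : ∑ i, outProb A (B i) = A.trace.re := by
  have h := congrArg Complex.re (sum_dot_onb hB A)
  rw [Complex.re_sum] at h
  exact h

set_option maxHeartbeats 1000000

/-- `d+1` pairwise MUBs, uniform priors: `∑ₘ Iₘ < d`; equivalently the average mutual
information per basis is less than `d/(d+1)` bits. -/
theorem dplus1_mub_total_info_lt
    {S : Type*} [Fintype S] (d : ℕ) (hd : 2 ≤ d)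
    (B : Fin (d + 1) → Fin d → Fin d → ℂ)
    (hB : ∀ m, IsONB (B m))
    (hMUB : ∀ m n, m ≠ n → AreMUB (B m) (B n))
    (E : S → Matrix (Fin d) (Fin d) ℂ) (hE : IsPOVM E) :
    ∑ m, mutInfo (B m) (fun _ => 1 / (d : ℝ)) E < (d : ℝ) ∧
    (∑ m, mutInfo (B m) (fun _ => 1 / (d : ℝ)) E) / ((d : ℝ) + 1) < (d : ℝ) / ((d : ℝ) + 1) := by
  classical
  have hd0 : 0 < d := lt_of_lt_of_le two_pos hd
  have hdR : (0:ℝ) < d := by exact_mod_cast hd0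
  have hdR' : (0:ℝ) < (d:ℝ) + 1 := by linarith
  obtain ⟨hEpsd, hEsum⟩ := hE
  set r : Fin (d+1) → S → Fin d → ℝ := fun m s i => outProb (E s) (B m i) with hrdef
  set t : S → ℝ := fun s => (E s).trace.re with htdef
  have hrnn : ∀ m s i, 0 ≤ r m s i := fun m s i => outProb_nonneg (hEpsd s) _
  have hts : ∀ m s, ∑ i, r m s i = t s := fun m s => sum_outProb (hB m) (E s)
  have htnn : ∀ s, 0 ≤ t s := fun s => by
    rw [← hts 0 s]; exact Finset.sum_nonneg fun i _ => hrnn 0 s i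
  have htotal : ∑ s, t s = d := by
    have h1 : (∑ s, E s).trace = (1 : Matrix (Fin d) (Fin d) ℂ).trace := by rw [hEsum]
    rw [Matrix.trace_sum, Matrix.trace_one] at h1
    have h2 := congrArg Complex.re h1
    rw [Complex.re_sum] at h2
    simpa using h2
  have hHp : shannonEntropy (fun _ : Fin d => 1/(d:ℝ)) = Real.logb 2 d := by
    rw [shannonEntropy, Finset.sum_const, Finset.card_univ, Fintype.card_fin, nsmul_eq_mul]
    rw [one_div, Real.logb_inv]
    field_simp
  set H : Fin (d+1) → S → ℝ := fun m s => shannonEntropy (fun i => r m s i / t s) with hHdef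
  have hcoef : ∀ m s, (∑ i, (1/(d:ℝ)) * outProb (E s) (B m i)) = t s / d := by
    intro m s
    rw [← Finset.mul_sum, show ∑ i, outProb (E s) (B m i) = t s from hts m s]
    ring
  have hmut : ∀ m, mutInfo (B m) (fun _ => 1/(d:ℝ)) E
      = Real.logb 2 d - ∑ s, (t s / d) * H m s := by
    intro m
    rw [mutInfo, hHp]
    congr 1
    apply Finset.sum_congr rfl
    intro s _
    rw [hcoef m s]
    congr 1
    show shannonEntropy _ = shannonEntropy (fun i => r m s i / t s)
    congr 1
    funext i
    show (1/(d:ℝ)) * outProb (E s) (B m i) / (t s / d) = outProb (E s) (B m i) / t s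
    rcases eq_or_ne (t s) 0 with h | h
    · simp [h]
    · field_simp
  set K : ℝ := ((d:ℝ)+1) * Real.logb 2 (((d:ℝ)+1)/2) with hKdef
  have hkey : ∀ s, K * (t s / d) ≤ ∑ m, (t s / d) * H m s := by
    intro s
    rcases eq_or_lt_of_le (htnn s) with h | ht
    · simp [← h]
    · have hq : ∀ m, ∑ i, r m s i / t s = 1 := by
        intro m
        rw [← Finset.sum_div, hts m s, div_self ht.ne']
      have hqnn : ∀ m i, 0 ≤ r m s i / t s := fun m i => div_nonneg (hrnn m s i) (htnn s)
      set c : Fin (d+1) → ℝ := fun m => ∑ i, (r m s i / t s)^2 with hcdef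
      have hcpos : ∀ m, 0 < c m := by
        intro m
        have h1 := hq m
        have hex : ∃ i, r m s i / t s ≠ 0 := by
          by_contra hcon
          push_neg at hcon
          rw [Finset.sum_congr rfl fun i _ => hcon i] at h1
          simp at h1
        obtain ⟨i0, h0⟩ := hex
        have hpos0 : 0 < (r m s i0 / t s)^2 := by positivity
        have hle : (r m s i0 / t s)^2 ≤ ∑ i, (r m s i / t s)^2 :=
          Finset.single_le_sum (f := fun i => (r m s i / t s)^2)
            (fun i _ => sq_nonneg _) (Finset.mem_univ i0)
        exact lt_of_lt_of_le hpos0 hle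
      have hsum2 : ∑ m, c m ≤ 2 := by
        have hmub : ∑ m, ∑ i, (r m s i)^2 ≤ (t s)^2 + ((E s * E s).trace).re :=
          mub_sum_sq_le hd0 hB hMUB (hEpsd s)
        have htr2 : ((E s * E s).trace).re ≤ (t s)^2 := trace_sq_le (hEpsd s)
        have hcrw : ∑ m, c m = (∑ m, ∑ i, (r m s i)^2) / (t s)^2 := by
          rw [Finset.sum_div]
          apply Finset.sum_congr rfl
          intro m _
          rw [Finset.sum_div]
          apply Finset.sum_congr rfl
          intro i _
          rw [div_pow]
        rw [hcrw, div_le_iff₀ (by positivity)]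
        linarith
      have hent : ∀ m, -Real.logb 2 (c m) ≤ H m s :=
        fun m => entropy_ge_neg_logb (fun i => r m s i / t s) (hqnn m) (hq m)
      have hlb := sum_neg_logb_ge (k := d+1) (by omega) c hcpos hsum2
      have hHsum : ((d:ℝ)+1) * Real.logb 2 (((d:ℝ)+1)/2) ≤ ∑ m, H m s := by
        push_cast at hlb
        calc ((d:ℝ)+1) * Real.logb 2 (((d:ℝ)+1)/2) ≤ ∑ m, -Real.logb 2 (c m) := hlb
          _ ≤ ∑ m, H m s := Finset.sum_le_sum fun m _ => hent m
      calc K * (t s / d) ≤ (∑ m, H m s) * (t s / d) := by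
            apply mul_le_mul_of_nonneg_right _ (by positivity)
            rw [hKdef]
            exact hHsum
        _ = ∑ m, (t s / d) * H m s := by
            rw [Finset.sum_mul]
            exact Finset.sum_congr rfl fun m _ => mul_comm _ _
  have hdouble : K ≤ ∑ m, ∑ s, (t s / d) * H m s := by
    rw [Finset.sum_comm]
    have e : K = ∑ s, K * (t s / d) := by
      rw [← Finset.mul_sum, ← Finset.sum_div, htotal, div_self hdR.ne', mul_one]
    calc K = ∑ s, K * (t s / d) := e
      _ ≤ ∑ s, ∑ m, (t s / d) * H m s := Finset.sum_le_sum fun s _ => hkey s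
  have hfinal : ∑ m, mutInfo (B m) (fun _ => 1/(d:ℝ)) E ≤ ((d:ℝ)+1) * Real.logb 2 d - K := by
    calc ∑ m, mutInfo (B m) (fun _ => 1/(d:ℝ)) E
        = ∑ m, (Real.logb 2 d - ∑ s, (t s / d) * H m s) :=
          Finset.sum_congr rfl fun m _ => hmut m
      _ = ((d:ℝ)+1) * Real.logb 2 d - ∑ m, ∑ s, (t s / d) * H m s := by
          rw [Finset.sum_sub_distrib, Finset.sum_const, Finset.card_univ, Fintype.card_fin,
            nsmul_eq_mul]
          push_cast
          ring
      _ ≤ ((d:ℝ)+1) * Real.logb 2 d - K := by linarith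
  have hlt : ∑ m, mutInfo (B m) (fun _ => 1/(d:ℝ)) E < d := by
    have hnum := final_numeric hd
    have hexp : ((d:ℝ)+1) * (Real.logb 2 d - Real.logb 2 (((d:ℝ)+1)/2))
        = ((d:ℝ)+1) * Real.logb 2 d - K := by
      rw [hKdef]; ring
    rw [hexp] at hnum
    linarith
  exact ⟨hlt, by
    rw [div_lt_div_iff_of_pos_right hdR']
    exact hlt⟩
end
end
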